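/- arXiv:2203.02957 — 12 statements merged into one kernel-verified Lean document; each statement's English description precedes it below -/
import Mathlib

section
/- Let 0<q<1 and μ>0. For any y∈ℝⁿ, if ȳ∈ℝⁿ is a global minimizer over ℝⁿ of the function z ↦ (1/(2μ))‖z−y‖² + ∑_{i=1}^n |z_i|^q, then every nonzero coordinate of ȳ satisfies |ȳ_i| ≥ (μ q(1−q))^{1/(2−q)}. -/
open Set

/-- Quantitative concavity gap of `x ↦ x^q` at midpoint `a/2`. -/
lemma taylor_lb (q : ℝ) (hq0 : 0 < q) (hq1 : q < 1) (a : ℝ) (ha : 0 < a) :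
    q * (1 - q) * a ^ (q - 2) / 2 * (a / 2) ^ 2 ≤
      a ^ q - (a / 2) ^ q - q * a ^ (q - 1) * (a / 2) := by
  set s : ℝ := a / 2 with hs_def
  have hs : 0 < s := by positivity
  have hsa : s < a := by rw [hs_def]; linarith
  set F : ℝ → ℝ := fun x => a ^ q - x ^ q - q * a ^ (q - 1) * (a - x) with hF
  set F' : ℝ → ℝ := fun x => q * a ^ (q - 1) - q * x ^ (q - 1) with hF'
  set G : ℝ → ℝ := fun x => (a - x) ^ 2 with hG
  set G' : ℝ → ℝ := fun x => -(2 * (a - x)) with hG'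
  have hFc : ContinuousOn F (Icc s a) := by
    apply ContinuousOn.sub
    · apply ContinuousOn.sub continuousOn_const
      exact fun x _ => (Real.continuousAt_rpow_const x q (Or.inr hq0.le)).continuousWithinAt
    · exact continuousOn_const.mul (continuousOn_const.sub continuousOn_id)
  have hFd : ∀ x ∈ Ioo s a, HasDerivAt F (F' x) x := by
    intro x hx
    have hx0 : 0 < x := hs.trans hx.1
    have h1 : HasDerivAt (fun y : ℝ => y ^ q) (q * x ^ (q - 1)) x :=
      Real.hasDerivAt_rpow_const (Or.inl hx0.ne')
    have h2 : HasDerivAt (fun y : ℝ => q * a ^ (q - 1) * (a - y))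
        (q * a ^ (q - 1) * (-1)) x := ((hasDerivAt_id x).const_sub a).const_mul _
    have := (h1.const_sub (a ^ q)).sub h2
    rw [show F' x = -(q * x ^ (q - 1)) - q * a ^ (q - 1) * -1 by simp only [hF']; ring]
    exact this
  have hGc : ContinuousOn G (Icc s a) :=
    ((continuousOn_const.sub continuousOn_id).pow 2)
  have hGd : ∀ x ∈ Ioo s a, HasDerivAt G (G' x) x := by
    intro x _
    have := ((hasDerivAt_id x).const_sub a).pow 2
    rw [show G' x = ↑2 * (a - id x) ^ (2 - 1) * -1 by simp only [hG', id_eq]; ring]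
    exact this
  obtain ⟨c, hc, hceq⟩ :=
    exists_ratio_hasDerivAt_eq_ratio_slope F F' hsa hFc hFd G G' hGc hGd
  have hc0 : 0 < c := hs.trans hc.1
  -- MVT on x ↦ x^(q-1) over [c, a]
  obtain ⟨d, hd, hdeq⟩ := exists_hasDerivAt_eq_slope (fun x => x ^ (q - 1))
    (fun x => (q - 1) * x ^ (q - 1 - 1)) hc.2
    (fun x hx => (Real.continuousAt_rpow_const x (q - 1)
      (Or.inl (ne_of_gt (hc0.trans_le hx.1)))).continuousWithinAt)
    (fun x hx => Real.hasDerivAt_rpow_const (Or.inl (ne_of_gt (hc0.trans hx.1))))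
  have hd0 : 0 < d := hc0.trans hd.1
  have hda : a ^ (q - 2) ≤ d ^ (q - 2) :=
    Real.rpow_le_rpow_of_nonpos hd0 hd.2.le (by linarith)
  have hac : (0:ℝ) < a - c := by linarith [hc.2]
  have hq12 : q - 1 - 1 = q - 2 := by ring
  rw [hq12, eq_div_iff (ne_of_gt (sub_pos.2 hc.2))] at hdeq
  -- hdeq : (q - 1) * d ^ (q - 2) * (a - c) = a ^ (q - 1) - c ^ (q - 1)
  have hslope : c ^ (q - 1) - a ^ (q - 1) = (1 - q) * d ^ (q - 2) * (a - c) := by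
    linear_combination hdeq
  -- simplify Cauchy MVT identity
  have hFa : F a = 0 := by simp [hF]
  have hGa : G a = 0 := by simp [hG]
  have hGs : G s = (a - s) ^ 2 := rfl
  have hF'c : F' c = q * a ^ (q - 1) - q * c ^ (q - 1) := rfl
  have hG'c : G' c = -(2 * (a - c)) := rfl
  rw [hFa, hGa, hGs, hF'c, hG'c] at hceq
  have hkey : F s * 2 * (a - c) =
      ((a - s) ^ 2 * (q * ((1 - q) * d ^ (q - 2)))) * (a - c) := by
    linear_combination -hceq + (a - s)^2 * q * hslope
  have hFs : F s * 2 = (a - s) ^ 2 * (q * ((1 - q) * d ^ (q - 2))) :=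
    mul_right_cancel₀ hac.ne' hkey
  have has : a - s = s := by rw [hs_def]; ring
  have hFsval : F s = a ^ q - s ^ q - q * a ^ (q - 1) * s := by
    simp only [hF]; rw [has]
  have hmul : q * (1 - q) * a ^ (q - 2) * (a - s) ^ 2 ≤
      q * (1 - q) * d ^ (q - 2) * (a - s) ^ 2 := by
    apply mul_le_mul_of_nonneg_right _ (sq_nonneg _)
    exact mul_le_mul_of_nonneg_left hda (mul_nonneg hq0.le (by linarith))
  rw [has] at hFs hmul
  rw [hFsval] at hFs
  show q * (1 - q) * a ^ (q - 2) / 2 * s ^ 2 ≤ a ^ q - s ^ q - q * a ^ (q - 1) * s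
  linarith [hFs, hmul]

/-- One-dimensional key lemma: lower bound for a positive minimizer. -/
lemma key (q μ b : ℝ) (hq0 : 0 < q) (hq1 : q < 1) (hμ : 0 < μ) {a : ℝ} (ha : 0 < a)
    (h : ∀ t : ℝ, 1 / (2 * μ) * (a - b) ^ 2 + a ^ q ≤ 1 / (2 * μ) * (t - b) ^ 2 + |t| ^ q) :
    μ * q * (1 - q) ≤ a ^ (2 - q) := by
  set φ : ℝ → ℝ := fun t => 1 / (2 * μ) * (t - b) ^ 2 + |t| ^ q with hφ
  have hlocmin : IsLocalMin φ a := by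
    apply Filter.Eventually.of_forall
    intro t
    have := h t
    simpa [hφ, abs_of_pos ha] using this
  -- derivative of φ at a
  have hψ : HasDerivAt (fun t : ℝ => 1 / (2 * μ) * (t - b) ^ 2 + t ^ q)
      (1 / (2 * μ) * (2 * (a - b) ^ 1 * 1) + q * a ^ (q - 1)) a := by
    exact ((((hasDerivAt_id a).sub_const b).pow 2).const_mul _).add
      (Real.hasDerivAt_rpow_const (Or.inl ha.ne'))
  have heq : φ =ᶠ[nhds a] (fun t : ℝ => 1 / (2 * μ) * (t - b) ^ 2 + t ^ q) := by
    filter_upwards [isOpen_Ioi.mem_nhds (show a ∈ Ioi (0:ℝ) from ha)] with t ht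
    simp [hφ, abs_of_pos (show (0:ℝ) < t from ht)]
  have hφ' : HasDerivAt φ (1 / (2 * μ) * (2 * (a - b) ^ 1 * 1) + q * a ^ (q - 1)) a :=
    hψ.congr_of_eventuallyEq heq
  have hD := hlocmin.hasDerivAt_eq_zero hφ'
  -- first order condition: a - b = -(μ * q * a^(q-1))
  have hab : a - b = -(μ * q * a ^ (q - 1)) := by
    have hμ' : (2 : ℝ) * μ ≠ 0 := by positivity
    field_simp at hD
    linarith [hD]
  -- instantiate minimality at a/2
  have h2 := h (a / 2)
  rw [abs_of_pos (by positivity : (0:ℝ) < a / 2)] at h2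
  -- (a/2 - b)^2 - (a-b)^2 = a * (μ q a^(q-1)) + a^2/4
  have hsq : (a / 2 - b) ^ 2 = (a - b) ^ 2 + a * (μ * q * a ^ (q - 1)) + a ^ 2 / 4 := by
    have : a / 2 - b = (a - b) - a / 2 := by ring
    rw [this, hab]; ring
  -- deduce: a^q - (a/2)^q - q a^(q-1) (a/2) ≤ a^2/(8μ)
  have hgap : a ^ q - (a / 2) ^ q - q * a ^ (q - 1) * (a / 2) ≤ a ^ 2 / (8 * μ) := by
    rw [hsq] at h2
    have hμ' : (0:ℝ) < 2 * μ := by positivity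
    have e1 : 1 / (2 * μ) * ((a - b) ^ 2 + a * (μ * q * a ^ (q - 1)) + a ^ 2 / 4)
        = 1 / (2 * μ) * (a - b) ^ 2 + q * a ^ (q - 1) * (a / 2) + a ^ 2 / (8 * μ) := by
      field_simp
      ring
    rw [e1] at h2
    linarith
  have htay := taylor_lb q hq0 hq1 a ha
  -- q (1-q) a^(q-2) ≤ 1/μ
  have hmain : q * (1 - q) * a ^ (q - 2) ≤ 1 / μ := by
    have ha2 : (0:ℝ) < (a / 2) ^ 2 := by positivity
    have := htay.trans hgap
    -- q(1-q)a^(q-2)/2 * (a/2)^2 ≤ a^2/(8μ), and (a/2)^2 = a^2/4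
    have e2 : (a / 2 : ℝ) ^ 2 = a ^ 2 / 4 := by ring
    rw [e2] at this
    have ha2' : (0:ℝ) < a ^ 2 := by positivity
    have h9 : q * (1 - q) * a ^ (q - 2) * a ^ 2 ≤ 1 / μ * a ^ 2 := by
      have e3 : a ^ 2 / (8 * μ) = 1 / μ * a ^ 2 / 8 := by field_simp
      rw [e3] at this
      linarith
    exact le_of_mul_le_mul_right h9 ha2'
  -- conclude
  have hpow : a ^ (q - 2) * a ^ (2 - q) = 1 := by
    rw [← Real.rpow_add ha]; norm_num
  have hge : 0 < a ^ (2 - q) := Real.rpow_pos_of_pos ha _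
  calc μ * q * (1 - q) = μ * (q * (1 - q) * a ^ (q - 2)) * a ^ (2 - q) := by
        rw [show μ * (q * (1 - q) * a ^ (q - 2)) * a ^ (2 - q)
            = μ * (q * (1 - q)) * (a ^ (q - 2) * a ^ (2 - q)) by ring, hpow]; ring
    _ ≤ μ * (1 / μ) * a ^ (2 - q) := by
        apply mul_le_mul_of_nonneg_right _ hge.le
        exact mul_le_mul_of_nonneg_left hmain hμ.le
    _ = a ^ (2 - q) := by field_simp

/-- Lower bound on the nonzero entries of a proximal point of the
`ℓ_q (0<q<1)` quasi-norm: if `ȳ` is a global minimizer of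
`z ↦ (1/(2μ))‖z−y‖² + ∑ i |z i|^q`, then every nonzero coordinate of `ȳ`
satisfies `|ȳ i| ≥ (μ q (1−q))^(1/(2−q))`. -/
theorem stmt0 (n : ℕ) (q μ : ℝ) (hq0 : 0 < q) (hq1 : q < 1) (hμ : 0 < μ)
    (y ybar : EuclideanSpace ℝ (Fin n))
    (hmin : ∀ z : EuclideanSpace ℝ (Fin n),
      (1 / (2 * μ)) * ‖ybar - y‖ ^ 2 + ∑ i, |ybar i| ^ q ≤
      (1 / (2 * μ)) * ‖z - y‖ ^ 2 + ∑ i, |z i| ^ q) :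
    ∀ i, ybar i ≠ 0 → (μ * q * (1 - q)) ^ (1 / (2 - q)) ≤ |ybar i| := by
  intro i hi
  have hns : ∀ z : EuclideanSpace ℝ (Fin n), ‖z - y‖ ^ 2 = ∑ j, (z j - y j) ^ 2 := by
    intro z
    rw [EuclideanSpace.norm_eq, Real.sq_sqrt (by positivity)]
    refine Finset.sum_congr rfl fun j _ => ?_
    rw [Real.norm_eq_abs, sq_abs]
    congr 1
  have h1D : ∀ t : ℝ, 1 / (2 * μ) * (ybar i - y i) ^ 2 + |ybar i| ^ q ≤
      1 / (2 * μ) * (t - y i) ^ 2 + |t| ^ q := by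
    intro t
    have hz := hmin (WithLp.toLp 2 (Function.update ybar i t))
    rw [hns, hns] at hz
    simp only [PiLp.toLp_apply] at hz
    have esplit : ∀ (g : Fin n → ℝ → ℝ) (v : Fin n → ℝ),
        ∑ j, g j (v j) = g i (v i) + ∑ j ∈ Finset.univ.erase i, g j (v j) := by
      intro g v
      rw [← Finset.add_sum_erase _ _ (Finset.mem_univ i)]
    have hupd : ∀ j ∈ Finset.univ.erase i,
        (Function.update ybar i t : Fin n → ℝ) j = ybar j := by
      intro j hj
      exact Function.update_of_ne (Finset.mem_erase.1 hj).1 _ _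
    have e1 := esplit (fun j u => (u - y j) ^ 2) (Function.update ybar i t)
    have e2 := esplit (fun j u => |u| ^ q) (Function.update ybar i t)
    have e3 := esplit (fun j u => (u - y j) ^ 2) ybar
    have e4 := esplit (fun j u => |u| ^ q) ybar
    simp only at e1 e2 e3 e4
    rw [e1, e2, e3, e4] at hz
    have s1 : ∑ x ∈ Finset.univ.erase i, (Function.update ybar i t x - y x) ^ 2
        = ∑ x ∈ Finset.univ.erase i, (ybar x - y x) ^ 2 :=
      Finset.sum_congr rfl fun j hj => by rw [hupd j hj]
    have s2 : ∑ x ∈ Finset.univ.erase i, |Function.update ybar i t x| ^ q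
        = ∑ x ∈ Finset.univ.erase i, |ybar x| ^ q :=
      Finset.sum_congr rfl fun j hj => by rw [hupd j hj]
    rw [s1, s2, Function.update_self] at hz
    rw [mul_add, mul_add] at hz
    linarith
  have habs : μ * q * (1 - q) ≤ |ybar i| ^ (2 - q) := by
    rcases hi.lt_or_gt with hneg | hpos
    · have ha : (0:ℝ) < -(ybar i) := by linarith
      rw [abs_of_neg hneg]
      apply key q μ (-(y i)) hq0 hq1 hμ ha
      intro t
      have := h1D (-t)
      rw [abs_of_neg hneg] at this
      calc 1 / (2 * μ) * (-(ybar i) - -(y i)) ^ 2 + (-(ybar i)) ^ q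
          = 1 / (2 * μ) * (ybar i - y i) ^ 2 + (-(ybar i)) ^ q := by ring_nf
        _ ≤ 1 / (2 * μ) * (-t - y i) ^ 2 + |-t| ^ q := this
        _ = 1 / (2 * μ) * (t - -(y i)) ^ 2 + |t| ^ q := by rw [abs_neg]; ring_nf
    · rw [abs_of_pos hpos]
      apply key q μ (y i) hq0 hq1 hμ hpos
      intro t
      have := h1D t
      rwa [abs_of_pos hpos] at this
  have h2q : (0:ℝ) < 2 - q := by linarith
  have hnn : (0:ℝ) ≤ μ * q * (1 - q) :=
    le_of_lt (mul_pos (mul_pos hμ hq0) (by linarith))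
  have := Real.rpow_le_rpow hnn habs (by positivity : (0:ℝ) ≤ 1 / (2 - q))
  rwa [← Real.rpow_mul (abs_nonneg _), mul_one_div, div_self h2q.ne', Real.rpow_one] at this
end

section
/- Let f:ℝ^m→ℝ be twice continuously differentiable, A∈ℝ^{m×n}, ψ(x):=f(Ax), λ>0, 0<q<1 and g(x):=∑_{i=1}^n |x_i|^q. If x̄∈ℝⁿ satisfies (∇ψ(x̄))_i + λ q·sign(x̄_i)·|x̄_i|^{q−1} = 0 for every index i with x̄_i ≠ 0, then there exists γ>0 such that x̄ is the unique global minimizer over ℝⁿ of z ↦ λ g(z) + (γ/2)‖z − (x̄ − γ^{−1}∇ψ(x̄))‖²; in particular x̄ ∈ prox_{γ^{−1}(λg)}(x̄ − γ^{−1}∇ψ(x̄)), i.e. x̄ is an L-type stationary point of min F := ψ + λ g. -/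
open Real Set

lemma mvt_rpow {p a b : ℝ} (ha : 0 < a) (hab : a < b) :
    ∃ c, a < c ∧ c < b ∧ b ^ p - a ^ p = p * c ^ (p-1) * (b - a) := by
  obtain ⟨c, hc, hslope⟩ := exists_hasDerivAt_eq_slope (fun s => s ^ p)
    (fun s => p * s ^ (p-1)) hab
    (fun s hs => (Real.continuousAt_rpow_const s p
      (Or.inl (ne_of_gt (lt_of_lt_of_le ha hs.1)))).continuousWithinAt)
    (fun s hs => Real.hasDerivAt_rpow_const (p := p) (Or.inl (ne_of_gt (ha.trans hs.1))))
  refine ⟨c, hc.1, hc.2, ?_⟩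
  have hba : b - a ≠ 0 := sub_ne_zero.2 (ne_of_gt hab)
  field_simp at hslope
  linarith [hslope]

lemma taylor_bound {q x t : ℝ} (hq0 : 0 < q) (hq1 : q < 1) (hx : 0 < x)
    (hlo : x/2 ≤ t) (hne : t ≠ x) :
    -(q * (1-q) * (x/2) ^ (q-2) * (t-x)^2) ≤ t ^ q - x ^ q - q * x^(q-1) * (t-x) := by
  have hx2 : 0 < x/2 := by linarith
  have ht : 0 < t := lt_of_lt_of_le hx2 hlo
  have hq1' : (0:ℝ) ≤ q * (1-q) := mul_nonneg hq0.le (by linarith)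
  rcases lt_or_gt_of_ne hne with h | h
  · -- t < x
    obtain ⟨c, hc1, hc2, hc3⟩ := mvt_rpow (p := q) ht h
    obtain ⟨d, hd1, hd2, hd3⟩ := mvt_rpow (p := q-1) (ht.trans hc1) hc2
    rw [show q-1-1 = q-2 by ring] at hd3
    have hdle : d ^ (q-2) ≤ (x/2) ^ (q-2) :=
      Real.rpow_le_rpow_of_nonpos hx2 (by linarith) (by linarith)
    have hDnn : (0:ℝ) ≤ d ^ (q-2) := Real.rpow_nonneg (by linarith) _
    have hXnn : (0:ℝ) ≤ (x/2) ^ (q-2) := Real.rpow_nonneg hx2.le _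
    have h1 : d ^ (q-2) * (x-c) ≤ (x/2) ^ (q-2) * (x-t) :=
      mul_le_mul hdle (by linarith) (by linarith) hXnn
    have h2 : d ^ (q-2) * (x-c) * (x-t) ≤ (x/2) ^ (q-2) * (x-t) * (x-t) :=
      mul_le_mul_of_nonneg_right h1 (by linarith)
    have key : q*(1-q)*(d^(q-2)*(x-c)*(x-t)) ≤ q*(1-q)*((x/2)^(q-2)*(x-t)*(x-t)) :=
      mul_le_mul_of_nonneg_left h2 hq1'
    have e1 : t^q - x^q - q*x^(q-1)*(t-x) = -(q*(1-q)*(d^(q-2)*(x-c)*(x-t))) := by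
      linear_combination (-(1:ℝ)) * hc3 + (q*(x-t)) * hd3
    rw [e1]
    nlinarith [key]
  · -- x < t
    obtain ⟨c, hc1, hc2, hc3⟩ := mvt_rpow (p := q) hx h
    obtain ⟨d, hd1, hd2, hd3⟩ := mvt_rpow (p := q-1) hx hc1
    rw [show q-1-1 = q-2 by ring] at hd3
    have hdle : d ^ (q-2) ≤ (x/2) ^ (q-2) :=
      Real.rpow_le_rpow_of_nonpos hx2 (by linarith) (by linarith)
    have hXnn : (0:ℝ) ≤ (x/2) ^ (q-2) := Real.rpow_nonneg hx2.le _
    have h1 : d ^ (q-2) * (c-x) ≤ (x/2) ^ (q-2) * (t-x) :=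
      mul_le_mul hdle (by linarith) (by linarith) hXnn
    have h2 : d ^ (q-2) * (c-x) * (t-x) ≤ (x/2) ^ (q-2) * (t-x) * (t-x) :=
      mul_le_mul_of_nonneg_right h1 (by linarith)
    have key : q*(1-q)*(d^(q-2)*(c-x)*(t-x)) ≤ q*(1-q)*((x/2)^(q-2)*(t-x)*(t-x)) :=
      mul_le_mul_of_nonneg_left h2 hq1'
    have e1 : t^q - x^q - q*x^(q-1)*(t-x) = -(q*(1-q)*(d^(q-2)*(c-x)*(t-x))) := by
      linear_combination hc3 + (q*(t-x)) * hd3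
    rw [e1]
    nlinarith [key]

lemma coord_pos {q lam x : ℝ} (hq0 : 0 < q) (hq1 : q < 1) (hlam : 0 < lam) (hx : 0 < x) :
    ∃ γ0 > (0:ℝ), ∀ γ, γ0 ≤ γ → ∀ t, t ≠ x →
      0 < lam * |t| ^ q - lam * x ^ q + γ/2 * (t-x)^2 - (t-x) * (lam * q * x^(q-1)) := by
  have hx2 : 0 < x/2 := by linarith
  set C : ℝ := q * (1-q) * (x/2) ^ (q-2) with hC
  have hCnn : 0 ≤ C := by
    have h1 := Real.rpow_nonneg hx2.le (q-2)
    have h2 : (0:ℝ) ≤ q*(1-q) := mul_nonneg hq0.le (by linarith)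
    rw [hC]; positivity
  set X : ℝ := x ^ (q-2) with hX
  have hXpos : 0 < X := Real.rpow_pos_of_pos hx _
  refine ⟨1 + 2*lam*C + 8*lam*q*X + 16*lam*X, by positivity, fun γ hγ t ht => ?_⟩
  have hγ1 : 1 + 2*lam*C ≤ γ := by nlinarith [mul_pos hlam hXpos, mul_pos (mul_pos hlam hq0) hXpos]
  have hγ2 : 8*lam*q*X ≤ γ := by nlinarith [mul_nonneg hlam.le hCnn, mul_pos hlam hXpos]
  have hγ3 : 16*lam*X ≤ γ := by nlinarith [mul_nonneg hlam.le hCnn, mul_pos (mul_pos hlam hq0) hXpos]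
  have hγpos : 0 < γ := by nlinarith [mul_nonneg hlam.le hCnn, mul_pos hlam hXpos, mul_pos (mul_pos hlam hq0) hXpos]
  have ex1 : x ^ (q-1) = X * x := by
    rw [hX, show q-1 = (q-2)+1 by ring, Real.rpow_add hx, Real.rpow_one]
  have exq : x ^ q = X * x^2 := by
    rw [hX, ← Real.rpow_natCast x 2, ← Real.rpow_add hx]; norm_num
  have hsub : t - x ≠ 0 := sub_ne_zero.2 ht
  have hs2 : 0 < (t-x)^2 := by positivity
  rcases le_or_gt (|t - x|) (x/2) with hcase | hcase
  · -- near case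
    have habs := abs_le.1 hcase
    have htpos : 0 < t := by linarith
    have htabs : |t| = t := abs_of_pos htpos
    have hT := taylor_bound hq0 hq1 hx (by linarith) ht
    rw [← hC] at hT
    rw [htabs]
    nlinarith [mul_le_mul_of_nonneg_left hT hlam.le,
      mul_nonneg (by linarith : (0:ℝ) ≤ γ - 1 - 2*lam*C) hs2.le,
      mul_nonneg hlam.le hCnn]
  · -- far case
    have htq : 0 ≤ lam * |t| ^ q := by
      have := Real.rpow_nonneg (abs_nonneg t) q; positivity
    have hts : t - x ≤ |t - x| := le_abs_self _
    set s : ℝ := |t - x| with hs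
    have hsq : (t-x)^2 = s*s := by rw [hs, abs_mul_abs_self]; ring
    have hspos : 0 < s := hx2.trans hcase
    rw [exq, ex1]
    have h5 : (t-x)*(lam*q*(X*x)) ≤ s*(lam*q*(X*x)) :=
      mul_le_mul_of_nonneg_right hts (by positivity)
    nlinarith [htq, h5, hsq,
      mul_nonneg (mul_nonneg (mul_nonneg hlam.le hq0.le) hXpos.le)
        (mul_nonneg hspos.le (by linarith : (0:ℝ) ≤ 2*s - x)),
      mul_pos (mul_pos hlam hXpos)
        (mul_pos (by linarith : (0:ℝ) < 2*s - x) (by linarith : (0:ℝ) < 2*s + x)),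
      mul_nonneg (by linarith : (0:ℝ) ≤ γ - 8*lam*q*X) (mul_nonneg hspos.le hspos.le),
      mul_nonneg (by linarith : (0:ℝ) ≤ γ - 16*lam*X) (mul_nonneg hspos.le hspos.le)]

lemma coord_zero {q lam : ℝ} (hq0 : 0 < q) (hq1 : q < 1) (hlam : 0 < lam) (v : ℝ) :
    ∃ γ0 > (0:ℝ), ∀ γ, γ0 ≤ γ → ∀ t, t ≠ 0 →
      0 < lam * |t| ^ q + γ/2 * t^2 + t * v := by
  rcases eq_or_ne v 0 with hv | hv
  · refine ⟨1, one_pos, fun γ hγ t ht => ?_⟩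
    have h1 : 0 < lam * |t| ^ q := by
      have := Real.rpow_pos_of_pos (abs_pos.2 ht) q; positivity
    have h2 : 0 < t^2 := by positivity
    subst hv; nlinarith
  · have hvpos : 0 < |v| := abs_pos.2 hv
    set T : ℝ := (lam/|v|) ^ ((1-q)⁻¹) with hT
    have hq1' : (1:ℝ) - q ≠ 0 := by linarith
    have hTpos : 0 < T := Real.rpow_pos_of_pos (div_pos hlam hvpos) _
    have hTkey : T ^ (q-1) = |v|/lam := by
      rw [hT, ← Real.rpow_mul (div_pos hlam hvpos).le]
      rw [show (1-q)⁻¹ * (q-1) = -1 by field_simp; ring]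
      rw [Real.rpow_neg_one, inv_div]
    refine ⟨1 + 2*|v|/T, by positivity, fun γ hγ t ht => ?_⟩
    have hγpos : (0:ℝ) < γ := by
      have : (0:ℝ) < 1 + 2*|v|/T := by positivity
      linarith
    have htpos : 0 < |t| := abs_pos.2 ht
    have ht2 : 0 < t^2 := by positivity
    have htv : -(|t| * |v|) ≤ t * v := by
      rw [← abs_mul]; exact neg_abs_le _
    have hsq : t^2 = |t| * |t| := by rw [abs_mul_abs_self]; ring
    rcases le_or_gt (|t|) T with hcase | hcase
    · have hkey : |t| * |v| ≤ lam * |t| ^ q := by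
        have e : |t| ^ q = |t| * |t| ^ (q-1) := by
          have h := Real.rpow_add htpos 1 (q-1)
          rw [Real.rpow_one, show (1:ℝ) + (q-1) = q by ring] at h
          exact h
        have hmono : T ^ (q-1) ≤ |t| ^ (q-1) :=
          Real.rpow_le_rpow_of_nonpos htpos hcase (by linarith)
        rw [hTkey] at hmono
        rw [e]
        calc |t| * |v| = lam * (|t| * (|v|/lam)) := by field_simp
          _ ≤ lam * (|t| * |t| ^ (q-1)) := by
              apply mul_le_mul_of_nonneg_left _ hlam.le
              exact mul_le_mul_of_nonneg_left hmono htpos.le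
      nlinarith [hkey, htv, hsq, mul_pos (by positivity : (0:ℝ) < γ/2) ht2]
    · have hlamtq : 0 < lam * |t| ^ q := by
        have := Real.rpow_pos_of_pos htpos q; positivity
      have h1 : |v| < (γ/2)*|t| := by
        have hγ' : 1 + 2*(|v|/T) ≤ γ := by rw [mul_div_assoc] at hγ; exact hγ
        have ha : (1/2 + |v|/T) * T ≤ (γ/2) * T :=
          mul_le_mul_of_nonneg_right (by linarith) hTpos.le
        have e : (1/2 + |v|/T)*T = T/2 + |v| := by field_simp
        have h2 : (γ/2)*T < (γ/2)*|t| := by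
          apply mul_lt_mul_of_pos_left hcase (by positivity)
        linarith
      nlinarith [hlamtq, mul_lt_mul_of_pos_right h1 htpos, htv, hsq]

lemma coord_main {q lam : ℝ} (hq0 : 0 < q) (hq1 : q < 1) (hlam : 0 < lam) (x v : ℝ)
    (h : x ≠ 0 → v + lam * q * Real.sign x * |x| ^ (q-1) = 0) :
    ∃ γ0 > (0:ℝ), ∀ γ, γ0 ≤ γ → ∀ t, t ≠ x →
      0 < lam * |t| ^ q - lam * |x| ^ q + γ/2 * (t-x)^2 + (t-x) * v := by
  rcases lt_trichotomy x 0 with hx | hx | hx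
  · -- x < 0
    have hv : v = lam * q * |x| ^ (q-1) := by
      have h0 := h (ne_of_lt hx)
      rw [Real.sign_of_neg hx] at h0
      linarith
    have hax : |x| = -x := abs_of_neg hx
    obtain ⟨γ0, hγ0, H⟩ := coord_pos hq0 hq1 hlam (neg_pos.2 hx)
    refine ⟨γ0, hγ0, fun γ hγ t ht => ?_⟩
    have H' := H γ hγ (-t) (fun hc => ht (by linarith [neg_eq_iff_eq_neg.1 hc]))
    rw [abs_neg, ← hax] at H'
    rw [show -t - |x| = -(t-x) by rw [hax]; ring, neg_sq, neg_mul] at H'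
    rw [hv]
    linarith [H']
  · -- x = 0
    subst hx
    obtain ⟨γ0, hγ0, H⟩ := coord_zero hq0 hq1 hlam v
    refine ⟨γ0, hγ0, fun γ hγ t ht => ?_⟩
    have H' := H γ hγ t ht
    simp only [abs_zero, sub_zero] at *
    rw [Real.zero_rpow (ne_of_gt hq0)]
    linarith [H']
  · -- 0 < x
    have hv : v = -(lam * q * |x| ^ (q-1)) := by
      have h0 := h (ne_of_gt hx)
      rw [Real.sign_of_pos hx] at h0
      linarith
    have hax : |x| = x := abs_of_pos hx
    obtain ⟨γ0, hγ0, H⟩ := coord_pos hq0 hq1 hlam hx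
    refine ⟨γ0, hγ0, fun γ hγ t ht => ?_⟩
    have H' := H γ hγ t ht
    rw [hv, mul_neg, hax]
    linarith [H']

/-- any critical point of `F = f∘A + λ‖·‖_q^q` (i.e. a point where the
smooth first-order condition holds on its support) is an L-type stationary point:
for some `γ > 0` it is the unique global minimizer of
`z ↦ λ g(z) + (γ/2)‖z − (x̄ − γ⁻¹∇ψ(x̄))‖²`. -/
theorem stmt1 (m n : ℕ) (q lam : ℝ) (hq0 : 0 < q) (hq1 : q < 1) (hlam : 0 < lam)
    (f : EuclideanSpace ℝ (Fin m) → ℝ) (hf : ContDiff ℝ 2 f)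
    (A : Matrix (Fin m) (Fin n) ℝ)
    (ψ : EuclideanSpace ℝ (Fin n) → ℝ) (hψ : ∀ x, ψ x = f (WithLp.toLp 2 (A.mulVec x)))
    (xbar : EuclideanSpace ℝ (Fin n))
    (hcrit : ∀ i, xbar i ≠ 0 →
      gradient ψ xbar i + lam * q * Real.sign (xbar i) * |xbar i| ^ (q - 1) = 0) :
    ∃ γ > (0:ℝ), ∀ z : EuclideanSpace ℝ (Fin n), z ≠ xbar →
      lam * (∑ i, |xbar i| ^ q)
          + (γ / 2) * ‖xbar - (xbar - γ⁻¹ • gradient ψ xbar)‖ ^ 2 <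
        lam * (∑ i, |z i| ^ q)
          + (γ / 2) * ‖z - (xbar - γ⁻¹ • gradient ψ xbar)‖ ^ 2 := by
  classical
  set v : EuclideanSpace ℝ (Fin n) := gradient ψ xbar with hv
  have key : ∀ i : Fin n, ∃ γ0 > (0:ℝ), ∀ γ, γ0 ≤ γ → ∀ t, t ≠ xbar i →
      0 < lam * |t| ^ q - lam * |xbar i| ^ q + γ/2 * (t - xbar i)^2 + (t - xbar i) * v i :=
    fun i => coord_main hq0 hq1 hlam (xbar i) (v i) (hcrit i)
  choose γ0 hγ0pos hγ0 using key
  have hsum0 : 0 ≤ ∑ i, γ0 i := Finset.sum_nonneg fun i _ => (hγ0pos i).le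
  refine ⟨1 + ∑ i, γ0 i, by linarith, fun z hz => ?_⟩
  set γ : ℝ := 1 + ∑ i, γ0 i with hγdef
  have hγpos : 0 < γ := by rw [hγdef]; linarith
  have hγi : ∀ i, γ0 i ≤ γ := by
    intro i
    have h1 : γ0 i ≤ ∑ j, γ0 j :=
      Finset.single_le_sum (fun j _ => (hγ0pos j).le) (Finset.mem_univ i)
    simp only [hγdef]; linarith
  have hγne : γ ≠ 0 := ne_of_gt hγpos
  have hnorm : ∀ w : EuclideanSpace ℝ (Fin n), ‖w‖^2 = ∑ i, (w i)^2 := by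
    intro w
    rw [EuclideanSpace.norm_eq, Real.sq_sqrt (Finset.sum_nonneg fun i _ => sq_nonneg _)]
    exact Finset.sum_congr rfl fun i _ => by rw [Real.norm_eq_abs, sq_abs]
  rw [sub_sub_cancel, hnorm, hnorm]
  simp only [PiLp.smul_apply, PiLp.sub_apply, smul_eq_mul]
  rw [Finset.mul_sum, Finset.mul_sum, Finset.mul_sum, Finset.mul_sum,
    ← Finset.sum_add_distrib, ← Finset.sum_add_distrib]
  have hexp : ∀ i, γ/2 * (z i - (xbar i - γ⁻¹ * v i))^2
      = γ/2 * (z i - xbar i)^2 + (z i - xbar i) * v i + γ/2 * (γ⁻¹ * v i)^2 := by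
    intro i; field_simp; ring
  obtain ⟨i0, hi0⟩ : ∃ i, z i ≠ xbar i := by
    by_contra hcon
    push_neg at hcon
    exact hz (PiLp.ext hcon)
  apply Finset.sum_lt_sum
  · intro i _
    rcases eq_or_ne (z i) (xbar i) with he | he
    · rw [hexp i, he]; ring_nf; simp
    · have := hγ0 i γ (hγi i) (z i) he
      rw [hexp i]; linarith
  · refine ⟨i0, Finset.mem_univ i0, ?_⟩
    have := hγ0 i0 γ (hγi i0) (z i0) hi0
    rw [hexp i0]; linarith
end

section
/- Let f:ℝ^m→ℝ be twice continuously differentiable, A∈ℝ^{m×n}, λ>0, 0<q<1, F(x):=f(Ax)+λ∑_{i=1}^n|x_i|^q. For x≠0 define the residual R(x) := ( ∑_{i: x_i≠0} [ (Aᵀ∇f(Ax))_i + λ q·sign(x_i)|x_i|^{q−1} ]² )^{1/2} (which equals the distance from 0 to the limiting subdifferential ∂F(x)). Fix x̄∈ℝⁿ∖{0}, let S̄=supp(x̄) and ū=x̄_{S̄}. Then the following are equivalent: (a) there exist ε>0, η>0, c>0 such that for all x∈ℝⁿ with ‖x−x̄‖≤ε and F(x̄)<F(x)<F(x̄)+η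 one has R(x) ≥ c·√(F(x)−F(x̄)); (b) there exist ε>0, η>0, c>0 such that for all u∈ℝ^{|S̄|} with ‖u−ū‖≤ε and F_{S̄}(ū)<F_{S̄}(u)<F_{S̄}(ū)+η one has ‖∇F_{S̄}(u)‖ ≥ c·√(F_{S̄}(u)−F_{S̄}(ū)). -/
open InnerProductSpace

noncomputable section KLAux

lemma my_hasDerivAt_abs_rpow {q t : ℝ} (ht : t ≠ 0) :
    HasDerivAt (fun s : ℝ => |s| ^ q) (q * Real.sign t * |t| ^ (q - 1)) t := by
  rcases ht.lt_or_gt with h | h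
  · have hne : (-t) ≠ 0 := neg_ne_zero.mpr ht
    have h1 : HasDerivAt (fun s : ℝ => (-s) ^ q) ((q * (-t) ^ (q - 1)) * (-1)) t :=
      (Real.hasDerivAt_rpow_const (p := q) (Or.inl hne)).comp t (hasDerivAt_neg t)
    have h2 : (fun s : ℝ => |s| ^ q) =ᶠ[nhds t] (fun s : ℝ => (-s) ^ q) := by
      filter_upwards [Iio_mem_nhds h] with s hs
      rw [abs_of_neg hs]
    have := h1.congr_of_eventuallyEq h2
    refine HasDerivAt.congr_deriv this ?_
    rw [Real.sign_of_neg h, abs_of_neg h]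
    ring
  · have h1 : HasDerivAt (fun s : ℝ => s ^ q) (q * t ^ (q - 1)) t :=
      Real.hasDerivAt_rpow_const (p := q) (Or.inl ht)
    have h2 : (fun s : ℝ => |s| ^ q) =ᶠ[nhds t] (fun s : ℝ => s ^ q) := by
      filter_upwards [Ioi_mem_nhds h] with s hs
      rw [abs_of_pos hs]
    have := h1.congr_of_eventuallyEq h2
    refine HasDerivAt.congr_deriv this ?_
    rw [Real.sign_of_pos h, abs_of_pos h]
    ring

lemma abs_real_sign {t : ℝ} (ht : t ≠ 0) : |Real.sign t| = 1 := by
  rcases ht.lt_or_gt with h | h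
  · rw [Real.sign_of_neg h]; norm_num
  · rw [Real.sign_of_pos h]; norm_num

def mulVecCLM {k l : Type*} [Fintype k] [Fintype l] (M : Matrix k l ℝ) :
    EuclideanSpace ℝ l →L[ℝ] EuclideanSpace ℝ k :=
  LinearMap.toContinuousLinearMap
    { toFun := fun v => WithLp.toLp 2 (M.mulVec v)
      map_add' := fun a b => by simp [Matrix.mulVec_add]
      map_smul' := fun r a => by simp [Matrix.mulVec_smul] }

lemma mulVecCLM_apply {k l : Type*} [Fintype k] [Fintype l] (M : Matrix k l ℝ)
    (v : EuclideanSpace ℝ l) : mulVecCLM M v = WithLp.toLp 2 (M.mulVec v) := rfl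

lemma coord_le_norm {ι : Type*} [Fintype ι] (w : EuclideanSpace ℝ ι) (i : ι) :
    |w i| ≤ ‖w‖ := by
  rw [EuclideanSpace.norm_eq, ← Real.sqrt_sq_eq_abs]
  apply Real.sqrt_le_sqrt
  have : |w i| ^ 2 ≤ ∑ j, ‖w j‖ ^ 2 := by
    rw [← Real.norm_eq_abs]
    exact Finset.single_le_sum (f := fun j => ‖w j‖ ^ 2) (fun j _ => by positivity)
      (Finset.mem_univ i)
  simpa [sq_abs] using this

lemma sum_transpose_mulVec {m : ℕ} {k : Type*} [Fintype k] (M : Matrix (Fin m) k ℝ)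
    (G : Fin m → ℝ) (v : k → ℝ) :
    ∑ i, (M.transpose.mulVec G) i * v i = ∑ j, G j * ∑ i, M j i * v i := by
  simp only [Matrix.mulVec, dotProduct, Matrix.transpose_apply, Finset.sum_mul,
    Finset.mul_sum]
  rw [Finset.sum_comm]
  exact Finset.sum_congr rfl fun j _ => Finset.sum_congr rfl fun i _ => by ring

lemma hasGradientAt_main {m : ℕ} {k : Type*} [Fintype k] [DecidableEq k]
    (q lam : ℝ) (f : EuclideanSpace ℝ (Fin m) → ℝ) (hf : ContDiff ℝ 2 f)
    (M : Matrix (Fin m) k ℝ) (u : EuclideanSpace ℝ k) (hu : ∀ i, u i ≠ 0) :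
    HasGradientAt (fun v : EuclideanSpace ℝ k => f (WithLp.toLp 2 (M.mulVec v)) + lam * ∑ i, |v i| ^ q)
      (WithLp.toLp 2 (fun i => (M.transpose.mulVec (gradient (F := EuclideanSpace ℝ (Fin m)) f (WithLp.toLp 2 (M.mulVec u)))) i
          + lam * q * Real.sign (u i) * |u i| ^ (q - 1)) : EuclideanSpace ℝ k) u := by
  set y : EuclideanSpace ℝ (Fin m) := WithLp.toLp 2 (M.mulVec u) with hy
  have hdf : DifferentiableAt ℝ f y := (hf.differentiable (by norm_num)) y
  have h1 : HasFDerivAt (fun v : EuclideanSpace ℝ k => f (mulVecCLM M v))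
      ((fderiv ℝ f y).comp (mulVecCLM M)) u :=
    (hdf.hasFDerivAt).comp u (mulVecCLM M).hasFDerivAt
  have h2 : HasFDerivAt (fun v : EuclideanSpace ℝ k => ∑ i, |v i| ^ q)
      (∑ i, (q * Real.sign (u i) * |u i| ^ (q - 1)) • (EuclideanSpace.proj i :
        EuclideanSpace ℝ k →L[ℝ] ℝ)) u := by
    apply HasFDerivAt.fun_sum
    intro i _
    have hp : HasFDerivAt (fun v : EuclideanSpace ℝ k => v i)
        (EuclideanSpace.proj i : EuclideanSpace ℝ k →L[ℝ] ℝ) u := by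
      have h : HasFDerivAt _ (EuclideanSpace.proj i : EuclideanSpace ℝ k →L[ℝ] ℝ) u :=
        (EuclideanSpace.proj i : EuclideanSpace ℝ k →L[ℝ] ℝ).hasFDerivAt
      exact h.congr_of_eventuallyEq (Filter.Eventually.of_forall fun v => by
        simp [PiLp.proj_apply])
    exact HasDerivAt.comp_hasFDerivAt u (my_hasDerivAt_abs_rpow (hu i)) hp
  have h3 := h1.add (h2.const_mul lam)
  rw [hasGradientAt_iff_hasFDerivAt]
  have hL : (toDual ℝ (EuclideanSpace ℝ k))
      (WithLp.toLp 2 (fun i => (M.transpose.mulVec (gradient (F := EuclideanSpace ℝ (Fin m)) f y)) i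
          + lam * q * Real.sign (u i) * |u i| ^ (q - 1)) : EuclideanSpace ℝ k)
      = (fderiv ℝ f y).comp (mulVecCLM M)
        + lam • ∑ i, (q * Real.sign (u i) * |u i| ^ (q - 1)) • (EuclideanSpace.proj i :
          EuclideanSpace ℝ k →L[ℝ] ℝ) := by
    ext v
    have hfd : fderiv ℝ f y (mulVecCLM M v)
        = ⟪gradient (F := EuclideanSpace ℝ (Fin m)) f y, (mulVecCLM M v)⟫_ℝ := by
      rw [gradient]; simp
    have hproj : ∀ i : k, (EuclideanSpace.proj (𝕜 := ℝ) i) v = v i := fun i => rfl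
    have hMv : ∀ j, (mulVecCLM M) v j = ∑ i, M j i * v i := fun j => rfl
    simp only [toDual_apply_apply, PiLp.inner_apply, RCLike.inner_apply, starRingEnd_apply,
      star_trivial, ContinuousLinearMap.add_apply, ContinuousLinearMap.coe_comp',
      Function.comp_apply, ContinuousLinearMap.coe_smul', Pi.smul_apply,
      ContinuousLinearMap.coe_sum', Finset.sum_apply, smul_eq_mul]
    rw [hfd]
    simp only [PiLp.inner_apply, RCLike.inner_apply, starRingEnd_apply, star_trivial,
      hproj, hMv]
    simp only [mul_comm (v.ofLp _)]
    simp only [add_mul, Finset.sum_add_distrib]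
    rw [sum_transpose_mulVec, Finset.mul_sum]
    congr 1
    all_goals exact Finset.sum_congr rfl fun i _ => by ring
  rw [hL]
  exact h3

def extSupp {n : ℕ} (S : Finset (Fin n)) (u : EuclideanSpace ℝ {i // i ∈ S}) :
    EuclideanSpace ℝ (Fin n) := WithLp.toLp 2 (fun i => if h : i ∈ S then u ⟨i, h⟩ else 0)

lemma extSupp_mem {n : ℕ} {S : Finset (Fin n)} (u : EuclideanSpace ℝ {i // i ∈ S})
    {i : Fin n} (h : i ∈ S) : extSupp S u i = u ⟨i, h⟩ := dif_pos h

lemma extSupp_not_mem {n : ℕ} {S : Finset (Fin n)} (u : EuclideanSpace ℝ {i // i ∈ S})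
    {i : Fin n} (h : i ∉ S) : extSupp S u i = 0 := dif_neg h

lemma sum_ext_supp {n : ℕ} (S : Finset (Fin n)) (g : Fin n → ℝ) (h0 : ∀ i ∉ S, g i = 0) :
    ∑ i, g i = ∑ i : {i // i ∈ S}, g i.1 := by
  rw [← Finset.sum_subset (Finset.subset_univ S) (fun i _ hi => h0 i hi)]
  exact Finset.sum_subtype S (fun _ => Iff.rfl) g

lemma extSupp_sub {n : ℕ} (S : Finset (Fin n)) (u v : EuclideanSpace ℝ {i // i ∈ S}) :
    extSupp S u - extSupp S v = extSupp S (u - v) := by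
  ext i
  by_cases h : i ∈ S
  · simp [PiLp.sub_apply, extSupp_mem _ h]
  · simp [PiLp.sub_apply, extSupp_not_mem _ h]

lemma norm_extSupp {n : ℕ} (S : Finset (Fin n)) (u : EuclideanSpace ℝ {i // i ∈ S}) :
    ‖extSupp S u‖ = ‖u‖ := by
  rw [EuclideanSpace.norm_eq, EuclideanSpace.norm_eq]
  congr 1
  rw [sum_ext_supp S _ (fun i hi => by simp [extSupp_not_mem _ hi])]
  exact Finset.sum_congr rfl fun i _ => by rw [extSupp_mem _ i.2]

end KLAux

/-- equivalence of the KL property of exponent 1/2 of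
`F = f∘A + λ‖·‖_q^q` at `x̄ ≠ 0` (stated via the residual
`R(x) = dist(0, ∂F(x))`) and the KL property of exponent 1/2 of the restricted
smooth function `F_{S̄}` at `ū = x̄_{S̄}` with `S̄ = supp(x̄)`. -/
theorem stmt3 (m n : ℕ) (q lam : ℝ) (hq0 : 0 < q) (hq1 : q < 1) (hlam : 0 < lam)
    (f : EuclideanSpace ℝ (Fin m) → ℝ) (hf : ContDiff ℝ 2 f)
    (A : Matrix (Fin m) (Fin n) ℝ)
    (F : EuclideanSpace ℝ (Fin n) → ℝ)
    (hF : ∀ x, F x = f (WithLp.toLp 2 (A.mulVec x)) + lam * ∑ i, |x i| ^ q)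
    (R : EuclideanSpace ℝ (Fin n) → ℝ)
    (hR : ∀ x, R x = Real.sqrt (∑ i ∈ Finset.univ.filter (fun i => x i ≠ 0),
      ((A.transpose.mulVec (gradient (F := EuclideanSpace ℝ (Fin m)) f (WithLp.toLp 2 (A.mulVec x)))) i
        + lam * q * Real.sign (x i) * |x i| ^ (q - 1)) ^ 2))
    (xbar : EuclideanSpace ℝ (Fin n)) (hxbar : xbar ≠ 0)
    (Sbar : Finset (Fin n)) (hSbar : ∀ i, i ∈ Sbar ↔ xbar i ≠ 0)
    (ASbar : Matrix (Fin m) {i // i ∈ Sbar} ℝ) (hASbar : ∀ j i, ASbar j i = A j i.1)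
    (ubar : EuclideanSpace ℝ {i // i ∈ Sbar}) (hubar : ∀ i, ubar i = xbar i.1)
    (FS : EuclideanSpace ℝ {i // i ∈ Sbar} → ℝ)
    (hFS : ∀ u, FS u = f (WithLp.toLp 2 (ASbar.mulVec u)) + lam * ∑ i, |u i| ^ q) :
    (∃ ε > (0:ℝ), ∃ η > (0:ℝ), ∃ c > (0:ℝ), ∀ x : EuclideanSpace ℝ (Fin n),
        ‖x - xbar‖ ≤ ε → F xbar < F x → F x < F xbar + η →
        c * Real.sqrt (F x - F xbar) ≤ R x) ↔
    (∃ ε > (0:ℝ), ∃ η > (0:ℝ), ∃ c > (0:ℝ), ∀ u : EuclideanSpace ℝ {i // i ∈ Sbar},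
        ‖u - ubar‖ ≤ ε → FS ubar < FS u → FS u < FS ubar + η →
        c * Real.sqrt (FS u - FS ubar) ≤ ‖gradient FS u‖) := by
  -- basic facts
  have hq1' : q - 1 ≠ 0 := by linarith
  have hmul : ∀ u : EuclideanSpace ℝ {i // i ∈ Sbar},
      A.mulVec (extSupp Sbar u) = ASbar.mulVec u := by
    intro u
    funext j
    show ∑ i, A j i * extSupp Sbar u i = ∑ i : {i // i ∈ Sbar}, ASbar j i * u i
    rw [sum_ext_supp Sbar (fun i => A j i * extSupp Sbar u i)
      (fun i hi => by simp only [extSupp_not_mem u hi, mul_zero])]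
    exact Finset.sum_congr rfl fun i _ => by rw [extSupp_mem _ i.2, hASbar]
  have hFE : ∀ u : EuclideanSpace ℝ {i // i ∈ Sbar}, F (extSupp Sbar u) = FS u := by
    intro u
    rw [hF, hFS, hmul]
    congr 1
    congr 1
    rw [sum_ext_supp Sbar (fun i => |extSupp Sbar u i| ^ q)
      (fun i hi => by simp only [extSupp_not_mem u hi, abs_zero,
        Real.zero_rpow (ne_of_gt hq0)])]
    exact Finset.sum_congr rfl fun i _ => by rw [extSupp_mem _ i.2]
  have hxbarE : xbar = extSupp Sbar ubar := by
    ext i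
    by_cases h : i ∈ Sbar
    · rw [extSupp_mem _ h, hubar]
    · rw [extSupp_not_mem _ h]
      by_contra hne
      exact h ((hSbar i).mpr hne)
  have hnorm_sub : ∀ u : EuclideanSpace ℝ {i // i ∈ Sbar},
      ‖extSupp Sbar u - xbar‖ = ‖u - ubar‖ := by
    intro u
    rw [hxbarE, extSupp_sub, norm_extSupp]
  -- δ : minimal magnitude of nonzero coordinates of xbar
  have hSne : Sbar.Nonempty := by
    by_contra h
    rw [Finset.not_nonempty_iff_eq_empty] at h
    apply hxbar
    ext i
    by_contra hne
    have : i ∈ Sbar := (hSbar i).mpr hne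
    simp [h] at this
  set δ : ℝ := Sbar.inf' hSne (fun i => |xbar i|) with hδ
  have hδpos : 0 < δ := by
    rw [hδ, Finset.lt_inf'_iff]
    exact fun i hi => abs_pos.mpr ((hSbar i).mp hi)
  have hδle : ∀ i : {i // i ∈ Sbar}, δ ≤ |xbar i.1| :=
    fun i => Finset.inf'_le _ i.2
  -- nonvanishing of coordinates near ubar
  have hnz : ∀ u : EuclideanSpace ℝ {i // i ∈ Sbar}, ‖u - ubar‖ ≤ δ / 2 →
      ∀ i, u i ≠ 0 := by
    intro u hu i h0
    have h1 : |u i - ubar i| ≤ ‖u - ubar‖ := by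
      have := coord_le_norm (u - ubar) i
      simpa [PiLp.sub_apply] using this
    have h2 : |ubar i| ≤ δ / 2 := by
      rw [h0] at h1
      simp only [zero_sub, abs_neg] at h1
      linarith
    have h3 : δ ≤ |ubar i| := by rw [hubar]; exact hδle i
    linarith
  -- gradient formula for FS
  have hFSfun : FS = fun v : EuclideanSpace ℝ {i // i ∈ Sbar} =>
      f (WithLp.toLp 2 (ASbar.mulVec v)) + lam * ∑ i, |v i| ^ q := funext hFS
  have hgrad : ∀ u : EuclideanSpace ℝ {i // i ∈ Sbar}, (∀ i, u i ≠ 0) →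
      gradient FS u = (WithLp.toLp 2 (fun i =>
        (ASbar.transpose.mulVec (gradient (F := EuclideanSpace ℝ (Fin m)) f
          (WithLp.toLp 2 (ASbar.mulVec u)))) i + lam * q * Real.sign (u i) * |u i| ^ (q - 1)) :
        EuclideanSpace ℝ {i // i ∈ Sbar}) := by
    intro u hu
    rw [hFSfun]
    exact (hasGradientAt_main q lam f hf ASbar u hu).gradient
  -- the norm of the gradient equals the residual on extended points
  have hnormgrad : ∀ u : EuclideanSpace ℝ {i // i ∈ Sbar}, (∀ i, u i ≠ 0) →
      ‖gradient FS u‖ = R (extSupp Sbar u) := by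
    intro u hu
    rw [hgrad u hu, hR]
    have hfilter : Finset.univ.filter (fun i => extSupp Sbar u i ≠ 0) = Sbar := by
      ext i
      simp only [Finset.mem_filter, Finset.mem_univ, true_and]
      constructor
      · intro h
        by_contra hi
        exact h (extSupp_not_mem _ hi)
      · intro h
        rw [extSupp_mem _ h]
        exact hu _
    rw [hfilter]
    rw [EuclideanSpace.norm_eq]
    congr 1
    rw [Finset.sum_subtype Sbar (fun _ => Iff.rfl)
      (fun i => ((A.transpose.mulVec (gradient (F := EuclideanSpace ℝ (Fin m)) f
        (WithLp.toLp 2 (A.mulVec (extSupp Sbar u))))) i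
        + lam * q * Real.sign (extSupp Sbar u i) * |extSupp Sbar u i| ^ (q - 1)) ^ 2)]
    apply Finset.sum_congr rfl
    intro i _
    rw [Real.norm_eq_abs, sq_abs, hmul]
    have hAt : A.transpose.mulVec (gradient (F := EuclideanSpace ℝ (Fin m)) f
        (WithLp.toLp 2 (ASbar.mulVec u))) i.1 = ASbar.transpose.mulVec (gradient
        (F := EuclideanSpace ℝ (Fin m)) f (WithLp.toLp 2 (ASbar.mulVec u))) i := by
      show ∑ j, A.transpose i.1 j * _ = ∑ j, ASbar.transpose i j * _
      exact Finset.sum_congr rfl fun j _ => by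
        rw [Matrix.transpose_apply, Matrix.transpose_apply, hASbar]
    rw [hAt, extSupp_mem _ i.2]
  constructor
  · -- (a) → (b)
    rintro ⟨ε, hε, η, hη, c, hc, hKL⟩
    refine ⟨min ε (δ / 2), by positivity, η, hη, c, hc, ?_⟩
    intro u hu h1 h2
    have hu2 : ‖u - ubar‖ ≤ δ / 2 := le_trans hu (min_le_right _ _)
    have hnzu := hnz u hu2
    have hx : ‖extSupp Sbar u - xbar‖ ≤ ε := by
      rw [hnorm_sub]; exact le_trans hu (min_le_left _ _)
    have hFx : F (extSupp Sbar u) = FS u := hFE u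
    have hFxbar : F xbar = FS ubar := by rw [hxbarE]; exact hFE ubar
    have := hKL (extSupp Sbar u) hx (by rw [hFx, hFxbar]; exact h1)
      (by rw [hFx, hFxbar]; exact h2)
    rw [hFx, hFxbar] at this
    rwa [hnormgrad u hnzu]
  · -- (b) → (a)
    rintro ⟨ε, hε, η, hη, c, hc, hKL⟩
    -- bound for the smooth part of the residual near xbar
    have hgcont : Continuous (gradient (F := EuclideanSpace ℝ (Fin m)) f) := by
      have h1 : Continuous (fderiv ℝ f) := hf.continuous_fderiv (by norm_num)
      have : (gradient (F := EuclideanSpace ℝ (Fin m)) f)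
          = fun x => (toDual ℝ (EuclideanSpace ℝ (Fin m))).symm (fderiv ℝ f x) := by
        funext x; rw [gradient]
      rw [this]
      exact (LinearIsometryEquiv.continuous _).comp h1
    set φ : EuclideanSpace ℝ (Fin n) → ℝ := fun x =>
      ‖(mulVecCLM A.transpose (gradient (F := EuclideanSpace ℝ (Fin m)) f
        (mulVecCLM A x)) : EuclideanSpace ℝ (Fin n))‖ with hφ
    have hφc : Continuous φ :=
      (((mulVecCLM A.transpose).continuous.comp
        (hgcont.comp (mulVecCLM A).continuous))).norm
    obtain ⟨Mb, hMb⟩ := (isCompact_closedBall xbar 1).exists_bound_of_continuousOn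
      hφc.continuousOn
    set B : ℝ := c * Real.sqrt η with hB
    have hBpos : 0 ≤ B := by positivity
    set W : ℝ := max ((Mb + B) / (lam * q)) 1 with hW
    have hW1 : (1:ℝ) ≤ W := le_max_right _ _
    have hWpos : (0:ℝ) < W := lt_of_lt_of_le one_pos hW1
    set t : ℝ := W ^ ((1:ℝ) / (q - 1)) with ht
    have htpos : 0 < t := Real.rpow_pos_of_pos hWpos _
    have ht1 : t ≤ 1 := Real.rpow_le_one_of_one_le_of_nonpos hW1
      (by rw [one_div]; exact (inv_nonpos.mpr (by linarith)))
    have htW : t ^ (q - 1) = W := by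
      rw [ht, ← Real.rpow_mul (le_of_lt hWpos), one_div_mul_cancel hq1', Real.rpow_one]
    have hkey : ∀ s : ℝ, 0 < s → s ≤ t → Mb + B ≤ lam * q * s ^ (q - 1) := by
      intro s hs hst
      have h1 : t ^ (q - 1) ≤ s ^ (q - 1) :=
        Real.rpow_le_rpow_of_nonpos hs hst (by linarith)
      rw [htW] at h1
      have h2 : (Mb + B) / (lam * q) ≤ W := le_max_left _ _
      have h3 : 0 < lam * q := by positivity
      calc Mb + B = ((Mb + B) / (lam * q)) * (lam * q) := by field_simp
        _ ≤ W * (lam * q) := by nlinarith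
        _ ≤ s ^ (q - 1) * (lam * q) := by nlinarith
        _ = lam * q * s ^ (q - 1) := by ring
    set ε' : ℝ := min (min ε (δ / 2)) t with hε'
    refine ⟨ε', by positivity, η, hη, c, hc, ?_⟩
    intro x hx hF1 hF2
    have hxε : ‖x - xbar‖ ≤ ε := le_trans hx (le_trans (min_le_left _ _) (min_le_left _ _))
    have hxδ : ‖x - xbar‖ ≤ δ / 2 :=
      le_trans hx (le_trans (min_le_left _ _) (min_le_right _ _))
    have hxt : ‖x - xbar‖ ≤ t := le_trans hx (min_le_right _ _)
    by_cases hsupp : ∀ i, i ∉ Sbar → x i = 0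
    · -- support contained in Sbar
      set u : EuclideanSpace ℝ {i // i ∈ Sbar} := WithLp.toLp 2 (fun i => x i.1) with hu
      have hEu : extSupp Sbar u = x := by
        ext i
        by_cases h : i ∈ Sbar
        · rw [extSupp_mem _ h]
        · rw [extSupp_not_mem _ h]; exact (hsupp i h).symm
      have hun : ‖u - ubar‖ = ‖x - xbar‖ := by rw [← hnorm_sub, hEu]
      have hnzu : ∀ i, u i ≠ 0 := hnz u (by rw [hun]; exact hxδ)
      have hFx : FS u = F x := by rw [← hFE, hEu]
      have hFxbar : FS ubar = F xbar := by rw [← hFE, ← hxbarE]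
      have := hKL u (by rw [hun]; exact hxε) (by rw [hFx, hFxbar]; exact hF1)
        (by rw [hFx, hFxbar]; exact hF2)
      rw [hFx, hFxbar, hnormgrad u hnzu, hEu] at this
      exact this
    · -- an extra nonzero coordinate outside Sbar
      push_neg at hsupp
      obtain ⟨i0, hi0S, hi0⟩ := hsupp
      have hxb0 : xbar i0 = 0 := by
        by_contra h
        exact hi0S ((hSbar i0).mpr h)
      have hxi0 : |x i0| ≤ t := by
        have := coord_le_norm (x - xbar) i0
        rw [PiLp.sub_apply, hxb0, sub_zero] at this
        linarith [le_trans this hxt]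
      have hxi0pos : 0 < |x i0| := abs_pos.mpr hi0
      set a : ℝ := (A.transpose.mulVec (gradient (F := EuclideanSpace ℝ (Fin m)) f
        (WithLp.toLp 2 (A.mulVec x)))) i0 with ha
      set b : ℝ := lam * q * Real.sign (x i0) * |x i0| ^ (q - 1) with hb
      have haM : |a| ≤ Mb := by
        have h1 : |a| ≤ φ x := by
          have := coord_le_norm ((mulVecCLM A.transpose
            (gradient (F := EuclideanSpace ℝ (Fin m)) f (mulVecCLM A x))) :
              EuclideanSpace ℝ (Fin n)) i0
          exact this
        have h2 : x ∈ Metric.closedBall xbar 1 := by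
          rw [Metric.mem_closedBall, dist_eq_norm]
          exact le_trans hxt ht1
        calc |a| ≤ φ x := h1
          _ ≤ ‖φ x‖ := le_abs_self _
          _ ≤ Mb := hMb x h2
      have hbval : |b| = lam * q * |x i0| ^ (q - 1) := by
        rw [hb, abs_mul, abs_mul, abs_mul, abs_real_sign hi0, mul_one,
          abs_of_pos hlam, abs_of_pos hq0, abs_of_nonneg (Real.rpow_nonneg (abs_nonneg _) _)]
      have hblarge : Mb + B ≤ |b| := by
        rw [hbval]
        exact hkey |x i0| hxi0pos hxi0
      have habs : |b| - |a| ≤ |a + b| := by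
        have h := abs_add_le (a + b) (-a)
        simp only [add_neg_cancel_comm, abs_neg] at h
        linarith
      have hRx : |a + b| ≤ R x := by
        rw [hR]
        have hmem : i0 ∈ Finset.univ.filter (fun i => x i ≠ 0) := by
          simp [hi0]
        have hsum : (a + b) ^ 2 ≤ ∑ i ∈ Finset.univ.filter (fun i => x i ≠ 0),
            ((A.transpose.mulVec (gradient (F := EuclideanSpace ℝ (Fin m)) f (WithLp.toLp 2 (A.mulVec x)))) i
              + lam * q * Real.sign (x i) * |x i| ^ (q - 1)) ^ 2 := by
          rw [ha, hb]
          exact Finset.single_le_sum (f := fun i =>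
            ((A.transpose.mulVec (gradient (F := EuclideanSpace ℝ (Fin m)) f (WithLp.toLp 2 (A.mulVec x)))) i
              + lam * q * Real.sign (x i) * |x i| ^ (q - 1)) ^ 2)
            (fun i _ => sq_nonneg _) hmem
        calc |a + b| = Real.sqrt ((a + b) ^ 2) := (Real.sqrt_sq_eq_abs _).symm
          _ ≤ _ := Real.sqrt_le_sqrt hsum
      have hfinal : c * Real.sqrt (F x - F xbar) ≤ B := by
        rw [hB]
        apply mul_le_mul_of_nonneg_left _ (le_of_lt hc)
        apply Real.sqrt_le_sqrt
        linarith
      have : B ≤ |a + b| := by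
        have : 0 ≤ Mb := le_trans (abs_nonneg a) haM
        linarith
      linarith
end

section
/- Let ψ:ℝⁿ→ℝ be continuously differentiable, λ>0, 0<q<1, g(x):=∑_{i=1}^n|x_i|^q, F:=ψ+λg, and let α̃>0, μ>0, L>0. Let x∈ℝⁿ and let x⁺ be a global minimizer over ℝⁿ of z ↦ ⟨∇ψ(x), z−x⟩ + (μ/2)‖z−x‖² + λ g(z). If ∇ψ is L-Lipschitz on a convex set containing x and x⁺ and μ ≥ L + α̃, then F(x⁺) ≤ F(x) − (α̃/2)‖x⁺−x‖². (In particular, the backtracking line search of the proximal-gradient step terminates after finitely many trials.) -/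
open Set

lemma grad_inner_eq {n : ℕ} (ψ : EuclideanSpace ℝ (Fin n) → ℝ) (y v : EuclideanSpace ℝ (Fin n)) :
    (inner ℝ (gradient ψ y) v : ℝ) = fderiv ℝ ψ y v := by
  rw [gradient, InnerProductSpace.toDual_symm_apply]

/-- sufficient-decrease property of the proximal-gradient step.
If `x⁺` minimizes `z ↦ ⟨∇ψ(x), z−x⟩ + (μ/2)‖z−x‖² + λ g(z)`, `∇ψ` is
`L`-Lipschitz on a convex set containing `x` and `x⁺`, and `μ ≥ L + α̃`, then
`F(x⁺) ≤ F(x) − (α̃/2)‖x⁺−x‖²` for `F = ψ + λ g`. -/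
theorem stmt4 (n : ℕ) (q lam alphat μ L : ℝ) (hq0 : 0 < q) (hq1 : q < 1)
    (hlam : 0 < lam) (halpha : 0 < alphat) (hμpos : 0 < μ) (hL : 0 < L)
    (ψ : EuclideanSpace ℝ (Fin n) → ℝ) (hψ : ContDiff ℝ 1 ψ)
    (x xp : EuclideanSpace ℝ (Fin n))
    (hmin : ∀ z : EuclideanSpace ℝ (Fin n),
      (inner ℝ (gradient ψ x) (xp - x) : ℝ) + (μ / 2) * ‖xp - x‖ ^ 2
          + lam * ∑ i, |xp i| ^ q ≤
        (inner ℝ (gradient ψ x) (z - x) : ℝ) + (μ / 2) * ‖z - x‖ ^ 2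
          + lam * ∑ i, |z i| ^ q)
    (C : Set (EuclideanSpace ℝ (Fin n))) (hC : Convex ℝ C)
    (hxC : x ∈ C) (hxpC : xp ∈ C)
    (hLip : LipschitzOnWith (Real.toNNReal L) (gradient ψ) C)
    (hμ : L + alphat ≤ μ) :
    ψ xp + lam * ∑ i, |xp i| ^ q ≤
      ψ x + lam * ∑ i, |x i| ^ q - (alphat / 2) * ‖xp - x‖ ^ 2 := by
  set v : EuclideanSpace ℝ (Fin n) := xp - x with hv
  set c : ℝ := (inner ℝ (gradient ψ x) v : ℝ) with hc
  have hdiff : Differentiable ℝ ψ := hψ.differentiable one_ne_zero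
  -- the curve γ t = x + t • v
  set γ : ℝ → EuclideanSpace ℝ (Fin n) := fun t => x + t • v with hγdef
  have hγC : ∀ t ∈ Icc (0:ℝ) 1, γ t ∈ C := by
    intro t ht
    have : γ t = (1 - t) • x + t • xp := by
      simp only [hγdef, hv]
      module
    rw [this]
    exact hC hxC hxpC (by linarith [ht.1, ht.2]) ht.1 (by ring)
  have hγ : ∀ t : ℝ, HasDerivAt γ v t := fun t => by
    have h := ((hasDerivAt_id t).smul_const v).const_add x
    rw [one_smul] at h
    exact h
  -- f t = ψ (γ t) - t * c
  set f : ℝ → ℝ := fun t => ψ (γ t) - t * c with hf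
  have hf' : ∀ t : ℝ, HasDerivAt f ((inner ℝ (gradient ψ (γ t)) v : ℝ) - c) t := by
    intro t
    have h1 : HasDerivAt (fun t => ψ (γ t)) (fderiv ℝ ψ (γ t) v) t :=
      (hdiff (γ t)).hasFDerivAt.comp_hasDerivAt t (hγ t)
    rw [← grad_inner_eq] at h1
    exact h1.sub (hasDerivAt_mul_const c)
  -- boundary function B t = ψ x + L * ‖v‖^2 * t^2 / 2
  set B : ℝ → ℝ := fun t => ψ x + L * ‖v‖ ^ 2 * t ^ 2 / 2 with hB
  have hB' : ∀ t : ℝ, HasDerivAt B (L * ‖v‖ ^ 2 * t) t := by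
    intro t
    have : HasDerivAt (fun t : ℝ => t ^ 2) (2 * t) t := by
      simpa using hasDerivAt_pow 2 t
    have := ((this.const_mul (L * ‖v‖ ^ 2)).div_const 2).const_add (ψ x)
    exact this.congr_deriv (by ring)
  have key : f 1 ≤ B 1 := by
    have := image_le_of_deriv_right_le_deriv_boundary (a := 0) (b := 1)
      (f := f) (f' := fun t => (inner ℝ (gradient ψ (γ t)) v : ℝ) - c)
      (B := B) (B' := fun t => L * ‖v‖ ^ 2 * t)
      (fun t _ => (hf' t).continuousAt.continuousWithinAt)
      (fun t ht => (hf' t).hasDerivWithinAt)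
      (by simp [hf, hB, hγdef])
      (fun t _ => (hB' t).continuousAt.continuousWithinAt)
      (fun t ht => (hB' t).hasDerivWithinAt)
      ?_
    · exact this ⟨zero_le_one, le_rfl⟩
    · intro t ht
      have hγt : γ t ∈ C := hγC t ⟨ht.1, ht.2.le⟩
      show (inner ℝ (gradient ψ (γ t)) v : ℝ) - c ≤ L * ‖v‖ ^ 2 * t
      have h2 : (inner ℝ (gradient ψ (γ t)) v : ℝ) - c
          = (inner ℝ (gradient ψ (γ t) - gradient ψ x) v : ℝ) := by
        rw [inner_sub_left]
      rw [h2]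
      calc (inner ℝ (gradient ψ (γ t) - gradient ψ x) v : ℝ)
          ≤ ‖gradient ψ (γ t) - gradient ψ x‖ * ‖v‖ := real_inner_le_norm _ _
        _ ≤ (L * (t * ‖v‖)) * ‖v‖ := by
            apply mul_le_mul_of_nonneg_right _ (norm_nonneg v)
            have := hLip.norm_sub_le hγt hxC
            have hdist : ‖γ t - x‖ = t * ‖v‖ := by
              simp only [hγdef, add_sub_cancel_left, norm_smul, Real.norm_eq_abs,
                abs_of_nonneg ht.1]
            rw [hdist] at this
            calc ‖gradient ψ (γ t) - gradient ψ x‖ ≤ (Real.toNNReal L : ℝ) * (t * ‖v‖) := this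
              _ = L * (t * ‖v‖) := by rw [Real.coe_toNNReal _ hL.le]
        _ = L * ‖v‖ ^ 2 * t := by ring
  -- descent lemma: ψ xp ≤ ψ x + c + L/2 ‖v‖²
  have hdesc : ψ xp ≤ ψ x + c + L / 2 * ‖v‖ ^ 2 := by
    have hγ1 : γ 1 = xp := by simp [hγdef, hv]
    have := key
    simp only [hf, hB, hγ1, one_mul, one_pow] at this
    linarith
  -- minimality at z = x
  have hminx' := hmin x
  simp only [sub_self, inner_zero_right, norm_zero] at hminx'
  nlinarith [sq_nonneg ‖v‖, hminx']
end

section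
/- Let ψ:ℝⁿ→ℝ be continuously differentiable, λ>0, 0<q<1, g(x):=∑_{i=1}^n|x_i|^q, F:=ψ+λg, and let α̃>0, μ̂>0, L̂>0. Let x∈ℝⁿ and let x̂ be a global minimizer over ℝⁿ of z ↦ ⟨∇ψ(x), z−x⟩ + (μ̂/2)‖z−x‖² + λ g(z). If F(x̂) > F(x) − (α̃/2)‖x̂−x‖² and ∇ψ is L̂-Lipschitz on a convex set containing x and x̂, then μ̂ < 2L̂ + α̃. -/
open InnerProductSpace Set

/-- Descent lemma: if `∇ψ` is `L`-Lipschitz on a convex set containing `x` and `y`, then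
`ψ y ≤ ψ x + ⟨∇ψ x, y − x⟩ + (L/2)‖y − x‖²`. -/
theorem descent_lemma {E : Type*} [NormedAddCommGroup E] [InnerProductSpace ℝ E]
    [CompleteSpace E]
    (ψ : E → ℝ) (hψ : Differentiable ℝ ψ) (L : ℝ) (hL : 0 ≤ L)
    (C : Set E) (hC : Convex ℝ C) (x y : E) (hx : x ∈ C) (hy : y ∈ C)
    (hLip : LipschitzOnWith (Real.toNNReal L) (gradient ψ) C) :
    ψ y ≤ ψ x + (inner ℝ (gradient ψ x) (y - x) : ℝ) + L / 2 * ‖y - x‖ ^ 2 := by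
  set v := y - x with hv
  have hmem : ∀ t ∈ Icc (0:ℝ) 1, x + t • v ∈ C := by
    intro t ht
    have := hC hx hy (by linarith [ht.2] : (0:ℝ) ≤ 1 - t) ht.1 (by ring)
    convert this using 1
    simp [hv]; module
  set h : ℝ → ℝ := fun t => ψ (x + t • v) - t * (inner ℝ (gradient ψ x) v : ℝ)
      - L / 2 * t ^ 2 * ‖v‖ ^ 2 with hh
  have hderiv : ∀ t : ℝ, HasDerivAt h
      ((inner ℝ (gradient ψ (x + t • v)) v : ℝ) - (inner ℝ (gradient ψ x) v : ℝ)
        - L * t * ‖v‖ ^ 2) t := by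
    intro t
    have h1 : HasDerivAt (fun t : ℝ => x + t • v) v t := by
      simpa using ((hasDerivAt_id t).smul_const v).const_add x
    have h2 : HasDerivAt (fun t : ℝ => ψ (x + t • v))
        ((inner ℝ (gradient ψ (x + t • v)) v : ℝ)) t := by
      have := ((hψ (x + t • v)).hasGradientAt.hasFDerivAt).comp_hasDerivAt t h1
      exact this.congr_deriv (by rw [toDual_apply_apply])
    have h3 : HasDerivAt (fun t : ℝ => t * (inner ℝ (gradient ψ x) v : ℝ))
        ((inner ℝ (gradient ψ x) v : ℝ)) t := by
      simpa using (hasDerivAt_id t).mul_const _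
    have h4 : HasDerivAt (fun t : ℝ => L / 2 * t ^ 2 * ‖v‖ ^ 2) (L * t * ‖v‖ ^ 2) t := by
      have := ((hasDerivAt_pow 2 t).const_mul (L / 2)).mul_const (‖v‖ ^ 2)
      exact this.congr_deriv (by ring)
    exact (h2.sub h3).sub h4
  have hnonpos : ∀ t ∈ Icc (0:ℝ) 1,
      (inner ℝ (gradient ψ (x + t • v)) v : ℝ) - (inner ℝ (gradient ψ x) v : ℝ)
        - L * t * ‖v‖ ^ 2 ≤ 0 := by
    intro t ht
    have hd : (inner ℝ (gradient ψ (x + t • v)) v : ℝ) - (inner ℝ (gradient ψ x) v : ℝ)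
        = (inner ℝ (gradient ψ (x + t • v) - gradient ψ x) v : ℝ) := by
      rw [inner_sub_left]
    rw [hd]
    have hcs := real_inner_le_norm (gradient ψ (x + t • v) - gradient ψ x) v
    have hlip := hLip.norm_sub_le (hmem t ht) hx
    have : ‖gradient ψ (x + t • v) - gradient ψ x‖ ≤ L * (t * ‖v‖) := by
      calc ‖gradient ψ (x + t • v) - gradient ψ x‖ ≤ L.toNNReal * ‖x + t • v - x‖ := hlip
        _ = L * ‖t • v‖ := by rw [Real.coe_toNNReal _ hL]; congr 2; abel
        _ = L * (|t| * ‖v‖) := by rw [norm_smul]; simp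
        _ = L * (t * ‖v‖) := by rw [abs_of_nonneg ht.1]
    nlinarith [norm_nonneg v, norm_nonneg (gradient ψ (x + t • v) - gradient ψ x),
      mul_le_mul_of_nonneg_right this (norm_nonneg v)]
  have hanti : AntitoneOn h (Icc 0 1) := by
    apply antitoneOn_of_deriv_nonpos (convex_Icc 0 1)
    · exact Continuous.continuousOn (continuous_iff_continuousAt.2 fun t => (hderiv t).continuousAt)
    · intro t _; exact (hderiv t).differentiableAt.differentiableWithinAt
    · intro t ht
      rw [interior_Icc] at ht
      rw [(hderiv t).deriv]
      exact hnonpos t ⟨le_of_lt ht.1, le_of_lt ht.2⟩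
  have := hanti (left_mem_Icc.mpr zero_le_one) (right_mem_Icc.mpr zero_le_one) zero_le_one
  simp only [hh] at this
  have h0 : x + (0:ℝ) • v = x := by simp
  have h1 : x + (1:ℝ) • v = y := by simp [hv]
  rw [h0, h1] at this
  linarith [this]

/-- if the proximal-gradient trial point `x̂` with step size `μ̂`
fails the sufficient-decrease test `F(x̂) ≤ F(x) − (α̃/2)‖x̂−x‖²` and `∇ψ` is
`L̂`-Lipschitz on a convex set containing `x` and `x̂`, then `μ̂ < 2L̂ + α̃`. -/
theorem stmt5 (n : ℕ) (q lam alphat μhat Lhat : ℝ) (hq0 : 0 < q) (hq1 : q < 1)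
    (hlam : 0 < lam) (halpha : 0 < alphat) (hμpos : 0 < μhat) (hL : 0 < Lhat)
    (ψ : EuclideanSpace ℝ (Fin n) → ℝ) (hψ : ContDiff ℝ 1 ψ)
    (x xhat : EuclideanSpace ℝ (Fin n))
    (hmin : ∀ z : EuclideanSpace ℝ (Fin n),
      (inner ℝ (gradient ψ x) (xhat - x) : ℝ) + (μhat / 2) * ‖xhat - x‖ ^ 2
          + lam * ∑ i, |xhat i| ^ q ≤
        (inner ℝ (gradient ψ x) (z - x) : ℝ) + (μhat / 2) * ‖z - x‖ ^ 2
          + lam * ∑ i, |z i| ^ q)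
    (hfail : ψ x + lam * (∑ i, |x i| ^ q) - (alphat / 2) * ‖xhat - x‖ ^ 2 <
      ψ xhat + lam * ∑ i, |xhat i| ^ q)
    (C : Set (EuclideanSpace ℝ (Fin n))) (hC : Convex ℝ C)
    (hxC : x ∈ C) (hxhatC : xhat ∈ C)
    (hLip : LipschitzOnWith (Real.toNNReal Lhat) (gradient ψ) C) :
    μhat < 2 * Lhat + alphat := by
  have hdesc := descent_lemma ψ (hψ.differentiable one_ne_zero) Lhat hL.le C hC x xhat hxC hxhatC hLip
  have hminx := hmin x
  simp only [sub_self, inner_zero_right, norm_zero] at hminx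
  have hs : (0:ℝ) ≤ ‖xhat - x‖ ^ 2 := by positivity
  by_contra hcon
  push_neg at hcon
  nlinarith [hdesc, hminx, hfail, hs, hL, halpha]
end

section
/- Let 0<q<1, λ>0 and 0<υ<M<∞. There exists a constant ϖ>0 such that for every γ>0 and every s∈ℝ, if t̄ is a global minimizer over ℝ of the function h_{γ,s}(t) := (γ/2)(t−s)² + λ|t|^q and υ ≤ |t̄| ≤ M, then γ + λ q(q−1)|t̄|^{q−2} ≥ ϖ. (Note γ + λq(q−1)|t̄|^{q−2} = h_{γ,s}''(t̄).) -/
open Real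

/-- Tangent line bound for the concave function `x ↦ x ^ q`, `0 < q < 1`. -/
private lemma rpow_tangent {q x y : ℝ} (hq0 : 0 < q) (hq1 : q < 1)
    (hx : 0 < x) (hy : 0 ≤ y) :
    y ^ q ≤ x ^ q + q * x ^ (q - 1) * (y - x) := by
  set s : ℝ := y / x - 1 with hs_def
  have hs : -1 ≤ s := by
    have : 0 ≤ y / x := div_nonneg hy hx.le
    simp only [hs_def]; linarith
  have hyx : y = x * (1 + s) := by
    rw [hs_def, add_sub_cancel, mul_div_assoc', mul_comm, mul_div_assoc, div_self hx.ne', mul_one]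
  have h1s : 0 ≤ 1 + s := by linarith
  have hb : (1 + s) ^ q ≤ 1 + q * s :=
    rpow_one_add_le_one_add_mul_self hs hq0.le hq1.le
  have hxq : 0 < x ^ q := Real.rpow_pos_of_pos hx q
  have hxq1 : x ^ (q - 1) * x = x ^ q := by
    rw [← Real.rpow_add_one hx.ne' (q - 1)]; ring_nf
  calc y ^ q = x ^ q * (1 + s) ^ q := by rw [hyx, Real.mul_rpow hx.le h1s]
    _ ≤ x ^ q * (1 + q * s) := mul_le_mul_of_nonneg_left hb hxq.le
    _ = x ^ q + q * x ^ (q - 1) * (y - x) := by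
        have : y - x = x * s := by rw [hyx]; ring
        rw [this, ← hxq1]; ring

set_option maxHeartbeats 1000000 in
/-- uniform positive lower bound `ϖ` (depending only on `q, λ, υ, M`)
on the second derivative `h_{γ,s}''(t̄) = γ + λq(q−1)|t̄|^{q−2}` of
`h_{γ,s}(t) = (γ/2)(t−s)² + λ|t|^q` at any global minimizer `t̄` with
`υ ≤ |t̄| ≤ M`. -/
theorem stmt6 (q lam υ M : ℝ) (hq0 : 0 < q) (hq1 : q < 1) (hlam : 0 < lam)
    (hυ : 0 < υ) (hυM : υ < M) :
    ∃ ϖ > (0:ℝ), ∀ γ s tbar : ℝ, 0 < γ →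
      (∀ t : ℝ, (γ / 2) * (tbar - s) ^ 2 + lam * |tbar| ^ q ≤
        (γ / 2) * (t - s) ^ 2 + lam * |t| ^ q) →
      υ ≤ |tbar| → |tbar| ≤ M →
      ϖ ≤ γ + lam * q * (q - 1) * |tbar| ^ (q - 2) := by
  have hM : 0 < M := hυ.trans hυM
  have h2q : (0:ℝ) < 2 - q := by linarith
  have h1q : (0:ℝ) < 1 - q := by linarith
  have hMq : (0:ℝ) < M ^ (q - 2) := Real.rpow_pos_of_pos hM _
  refine ⟨lam * (2 - q) * (1 - q) * M ^ (q - 2),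
    mul_pos (mul_pos (mul_pos hlam h2q) h1q) hMq, ?_⟩
  intro γ s tbar hγ hmin h1 h2
  have hu : 0 < |tbar| := hυ.trans_le h1
  -- reduce to a positive minimizer |tbar| with adjusted shift s'
  obtain ⟨s', hmin'⟩ : ∃ s', ∀ t : ℝ, (γ / 2) * (|tbar| - s') ^ 2 + lam * |tbar| ^ q ≤
      (γ / 2) * (t - s') ^ 2 + lam * |t| ^ q := by
    rcases le_or_gt 0 tbar with htb | htb
    · refine ⟨s, fun t => ?_⟩
      have e1 : (|tbar| - s) ^ 2 = (tbar - s) ^ 2 := by rw [abs_of_nonneg htb]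
      rw [e1]; exact hmin t
    · refine ⟨-s, fun t => ?_⟩
      have h := hmin (-t)
      rw [abs_neg] at h
      have e1 : (|tbar| - -s) ^ 2 = (tbar - s) ^ 2 := by rw [abs_of_neg htb]; ring
      have e2 : (t - -s) ^ 2 = (-t - s) ^ 2 := by ring
      rw [e1, e2]; exact h
  set u : ℝ := |tbar| with hu_def
  -- first-order condition
  have hkey : ∀ ε : ℝ, -u ≤ ε →
      0 ≤ (γ * (u - s') + lam * q * u ^ (q - 1)) * ε + γ * ε ^ 2 / 2 := by
    intro ε hε
    have huε : (0:ℝ) ≤ u + ε := by linarith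
    have h := hmin' (u + ε)
    rw [abs_of_nonneg huε] at h
    have htan : (u + ε) ^ q ≤ u ^ q + q * u ^ (q - 1) * ε := by
      have := rpow_tangent hq0 hq1 hu huε
      simpa using this
    nlinarith [mul_le_mul_of_nonneg_left htan hlam.le]
  have hA0 : γ * (u - s') + lam * q * u ^ (q - 1) = 0 := by
    set A : ℝ := γ * (u - s') + lam * q * u ^ (q - 1) with hA_def
    by_contra hA
    have hAabs : 0 < |A| := abs_pos.mpr hA
    set δ : ℝ := min u (|A| / γ) with hδ_def
    have hδpos : 0 < δ := lt_min hu (div_pos hAabs hγ)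
    have hδu : δ ≤ u := min_le_left _ _
    have h1' := hkey δ (by linarith)
    have h2' := hkey (-δ) (by linarith)
    have habsle : |A| * δ ≤ γ * δ ^ 2 / 2 := by
      rcases abs_cases A with ⟨hc, _⟩ | ⟨hc, _⟩
      · rw [hc]; nlinarith
      · rw [hc]; nlinarith
    have hgd : δ * γ ≤ |A| := (le_div_iff₀ hγ).mp (min_le_right _ _)
    nlinarith [mul_le_mul_of_nonneg_right hgd hδpos.le]
  -- compare with t = 0
  have hzero := hmin' 0
  rw [abs_zero, Real.zero_rpow (ne_of_gt hq0)] at hzero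
  have hzero' : γ / 2 * u ^ 2 - γ * u * s' + lam * u ^ q ≤ 0 := by nlinarith
  have huq : u ^ (q - 1) * u = u ^ q := by
    rw [← Real.rpow_add_one hu.ne' (q - 1)]; ring_nf
  have hfoc : γ * u * s' = γ * u ^ 2 + lam * q * u ^ q := by
    linear_combination (-u) * hA0 + lam * q * huq
  -- hence 2 * lam * (1 - q) * u ^ (q-2) ≤ γ
  have huq2 : u ^ (q - 2) * u ^ 2 = u ^ q := by
    rw [← Real.rpow_natCast u 2, ← Real.rpow_add hu]; norm_num
  have hγlb : 2 * lam * (1 - q) * u ^ (q - 2) ≤ γ := by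
    have h3 : lam * (1 - q) * u ^ q ≤ γ / 2 * u ^ 2 := by nlinarith
    have hu2 : (0:ℝ) < u ^ 2 := by positivity
    rw [← huq2] at h3
    nlinarith
  -- conclude
  have hMu : M ^ (q - 2) ≤ u ^ (q - 2) :=
    Real.rpow_le_rpow_of_nonpos hu h2 (by linarith)
  have hc1 : (0:ℝ) ≤ lam * (2 - q) * (1 - q) := mul_nonneg (mul_nonneg hlam.le h2q.le) h1q.le
  nlinarith [mul_le_mul_of_nonneg_left hMu hc1,
    mul_le_mul_of_nonneg_left hγlb (by linarith : (0:ℝ) ≤ 1 - q / 2)]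
end

section
/- Let 0<q<1, λ>0, μ̄>0, ν>0 and ϖ>0. Let x, x̄ ∈ ℝⁿ∖{0} satisfy: |x̄_i| > ν for every i∈supp(x̄); |x_i| > ν/2 for every i∈supp(x); μ̄ + λq(q−1)|x̄|_min^{q−2} ≥ ϖ; and ‖x − x̄‖ ≤ min{ ν/3, 2^{q−3}ϖ / (2λq(1−q)(2−q)ν^{q−3}) }. Then sign(x_i) = sign(x̄_i) for every i∈{1,…,n} (in particular supp(x)=supp(x̄)), and μ̄ + λq(q−1)|x|_min^{q−2} ≥ (1/2)( μ̄ + λq(q−1)|x̄|_min^{q−2} ). -/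
/-- `|x|_min`: the smallest absolute value of the nonzero entries of `x`. -/
noncomputable def minAbs {n : ℕ} (x : EuclideanSpace ℝ (Fin n)) : ℝ :=
  sInf {t : ℝ | ∃ i, x i ≠ 0 ∧ t = |x i|}

lemma minAbs_spec {n : ℕ} (x : EuclideanSpace ℝ (Fin n)) (hx : x ≠ 0) :
    (∃ i, x i ≠ 0 ∧ minAbs x = |x i|) ∧ ∀ i, x i ≠ 0 → minAbs x ≤ |x i| := by
  set S := {t : ℝ | ∃ i, x i ≠ 0 ∧ t = |x i|} with hS
  have hfin : S.Finite := by
    have hsub : S ⊆ (fun i => |x i|) '' Set.univ := by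
      rintro t ⟨i, hi, rfl⟩; exact ⟨i, trivial, rfl⟩
    exact (Set.finite_univ.image _).subset hsub
  have hne : S.Nonempty := by
    obtain ⟨i, hi⟩ : ∃ i, x i ≠ 0 := by
      by_contra h
      push_neg at h
      exact hx (PiLp.ext (fun i => by simpa using h i))
    exact ⟨|x i|, i, hi, rfl⟩
  constructor
  · exact hne.csInf_mem hfin
  · exact fun i hi => csInf_le hfin.bddBelow ⟨i, hi, rfl⟩

lemma coord_abs_le_norm {n : ℕ} (y : EuclideanSpace ℝ (Fin n)) (i : Fin n) :
    |y i| ≤ ‖y‖ := by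
  rw [EuclideanSpace.norm_eq]
  calc |y i| = Real.sqrt (‖y i‖ ^ 2) := by
        rw [Real.sqrt_sq (norm_nonneg _)]; exact (Real.norm_eq_abs _).symm
    _ ≤ Real.sqrt (∑ j, ‖y j‖ ^ 2) :=
        Real.sqrt_le_sqrt (Finset.single_le_sum (f := fun j => ‖y j‖ ^ 2)
          (fun j _ => sq_nonneg _) (Finset.mem_univ i))

lemma rpow_sub_rpow_le (q : ℝ) (hq : q < 1) {s t : ℝ} (hs : 0 < s) (hst : s ≤ t) :
    s ^ (q - 2) - t ^ (q - 2) ≤ (2 - q) * s ^ (q - 3) * (t - s) := by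
  rcases eq_or_lt_of_le hst with rfl | hlt
  · simp
  · have ht : (0:ℝ) < t := hs.trans hlt
    obtain ⟨c, hc, hderiv⟩ :=
      exists_hasDerivAt_eq_slope (fun u => u ^ (q - 2)) (fun u => (q - 2) * u ^ (q - 2 - 1)) hlt
        (fun u hu => by
          have hu0 : u ≠ 0 := ne_of_gt (lt_of_lt_of_le hs hu.1)
          exact (Real.hasDerivAt_rpow_const (Or.inl hu0)).continuousAt.continuousWithinAt)
        (fun u hu => Real.hasDerivAt_rpow_const (Or.inl (ne_of_gt (hs.trans hu.1))))
    have hc0 : 0 < c := hs.trans hc.1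
    have hts : t - s ≠ 0 := ne_of_gt (sub_pos.mpr hlt)
    have h31 : q - 2 - 1 = q - 3 := by ring
    rw [h31, eq_div_iff hts] at hderiv
    have hcs : c ^ (q - 3) ≤ s ^ (q - 3) :=
      Real.rpow_le_rpow_of_nonpos hs hc.1.le (by linarith)
    have hpos : (0:ℝ) ≤ t - s := by linarith
    have hmul : (2 - q) * c ^ (q - 3) * (t - s) ≤ (2 - q) * s ^ (q - 3) * (t - s) :=
      mul_le_mul_of_nonneg_right
        (mul_le_mul_of_nonneg_left hcs (by linarith)) hpos
    nlinarith [hderiv, hmul]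

/-- sufficient condition for the switching criterion of HpgSRN:
sign stability `sign(x) = sign(x̄)` and the curvature lower bound
`μ̄ + λq(q−1)|x|_min^{q−2} ≥ (1/2)(μ̄ + λq(q−1)|x̄|_min^{q−2})`. -/
theorem stmt7 (n : ℕ) (q lam μb ν ϖ : ℝ) (hq0 : 0 < q) (hq1 : q < 1)
    (hlam : 0 < lam) (hμb : 0 < μb) (hν : 0 < ν) (hϖ : 0 < ϖ)
    (x xbar : EuclideanSpace ℝ (Fin n)) (hx : x ≠ 0) (hxbar : xbar ≠ 0)
    (h1 : ∀ i, xbar i ≠ 0 → ν < |xbar i|)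
    (h2 : ∀ i, x i ≠ 0 → ν / 2 < |x i|)
    (h3 : ϖ ≤ μb + lam * q * (q - 1) * (minAbs xbar) ^ (q - 2))
    (h4 : ‖x - xbar‖ ≤ min (ν / 3)
      ((2:ℝ) ^ (q - 3) * ϖ / (2 * lam * q * (1 - q) * (2 - q) * ν ^ (q - 3)))) :
    (∀ i, Real.sign (x i) = Real.sign (xbar i)) ∧
    (1 / 2) * (μb + lam * q * (q - 1) * (minAbs xbar) ^ (q - 2)) ≤
      μb + lam * q * (q - 1) * (minAbs x) ^ (q - 2) := by
  set δ := ‖x - xbar‖ with hδ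
  have hδ1 : δ ≤ ν / 3 := h4.trans (min_le_left _ _)
  have hδ2 : δ ≤ (2:ℝ) ^ (q - 3) * ϖ / (2 * lam * q * (1 - q) * (2 - q) * ν ^ (q - 3)) :=
    h4.trans (min_le_right _ _)
  have hδ0 : 0 ≤ δ := norm_nonneg _
  have hcoord : ∀ i, |x i - xbar i| ≤ δ := by
    intro i
    have := coord_abs_le_norm (x - xbar) i
    simpa using this
  -- sign stability
  have hsign : ∀ i, Real.sign (x i) = Real.sign (xbar i) := by
    intro i
    rcases eq_or_ne (xbar i) 0 with hb | hb
    · have hxi : x i = 0 := by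
        by_contra hxi
        have := h2 i hxi
        have h5 := hcoord i
        rw [hb, sub_zero] at h5
        linarith
      rw [hb, hxi]
    · have hνb := h1 i hb
      have h5 := hcoord i
      have h6 := abs_le.mp h5
      rcases lt_or_gt_of_ne hb with hneg | hpos
      · have : |xbar i| = -(xbar i) := abs_of_neg hneg
        have hxi : x i < 0 := by
          rw [this] at hνb; linarith
        rw [Real.sign_of_neg hxi, Real.sign_of_neg hneg]
      · have : |xbar i| = xbar i := abs_of_pos hpos
        have hxi : 0 < x i := by
          rw [this] at hνb; linarith
        rw [Real.sign_of_pos hxi, Real.sign_of_pos hpos]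
  refine ⟨hsign, ?_⟩
  -- supports are equal
  have hsupp : ∀ i, x i ≠ 0 ↔ xbar i ≠ 0 := by
    intro i
    constructor <;> intro h <;> intro h0
    · have := hsign i
      rw [h0, Real.sign_zero] at this
      exact h (Real.sign_eq_zero_iff.mp this)
    · have := hsign i
      rw [h0, Real.sign_zero] at this
      exact h (Real.sign_eq_zero_iff.mp this.symm)
  obtain ⟨⟨i₀, hi₀, hmx⟩, hminx⟩ := minAbs_spec x hx
  obtain ⟨⟨j₀, hj₀, hmxb⟩, hminxb⟩ := minAbs_spec xbar hxbar
  set s := minAbs x with hs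
  set t := minAbs xbar with ht
  have hs_half : ν / 2 < s := by rw [hmx]; exact h2 i₀ hi₀
  have hs0 : 0 < s := by linarith
  have ht_ν : ν < t := by rw [hmxb]; exact h1 j₀ hj₀
  have ht0 : 0 < t := by linarith
  -- t ≤ s + δ
  have hts : t ≤ s + δ := by
    have hbi₀ : xbar i₀ ≠ 0 := (hsupp i₀).mp hi₀
    have h5 : t ≤ |xbar i₀| := hminxb i₀ hbi₀
    have h6 : |xbar i₀| ≤ |x i₀| + |xbar i₀ - x i₀| := by
      have := abs_sub_abs_le_abs_sub (xbar i₀) (x i₀)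
      linarith [abs_nonneg (xbar i₀ - x i₀)]
    have h7 : |xbar i₀ - x i₀| ≤ δ := by
      have := hcoord i₀
      rwa [← abs_neg, neg_sub] at this
    rw [hmx]
    linarith
  set a := s ^ (q - 2) with ha
  set b := t ^ (q - 2) with hb
  rcases le_or_gt t s with hle | hlt
  · -- a ≤ b, easy case
    have hab : a ≤ b := Real.rpow_le_rpow_of_nonpos ht0 hle (by linarith)
    have hc0 : lam * q * (q - 1) ≤ 0 := by nlinarith [mul_pos hlam hq0]
    have h8 : lam * q * (q - 1) * b ≤ lam * q * (q - 1) * a :=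
      mul_le_mul_of_nonpos_left hab hc0
    linarith [h3, hϖ]
  · -- s < t: mean value estimate
    have hkey : a - b ≤ (2 - q) * s ^ (q - 3) * (t - s) := by
      rw [ha, hb]; exact rpow_sub_rpow_le q hq1 hs0 hlt.le
    have hsp : s ^ (q - 3) ≤ (ν / 2) ^ (q - 3) :=
      Real.rpow_le_rpow_of_nonpos (by linarith) hs_half.le (by linarith)
    have hν2 : (ν / 2) ^ (q - 3) = ν ^ (q - 3) / 2 ^ (q - 3) :=
      Real.div_rpow hν.le (by norm_num) (q - 3)
    have hB : (0:ℝ) < (2:ℝ) ^ (q - 3) := Real.rpow_pos_of_pos (by norm_num) _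
    have hN : (0:ℝ) < ν ^ (q - 3) := Real.rpow_pos_of_pos hν _
    have h2q : (0:ℝ) < 2 - q := by linarith
    have h1q : (0:ℝ) < 1 - q := by linarith
    have hts' : t - s ≤ δ := by linarith
    have hts0 : (0:ℝ) ≤ t - s := by linarith
    have hV : (0:ℝ) < (ν / 2) ^ (q - 3) := Real.rpow_pos_of_pos (by linarith) _
    -- turn everything into opaque reals
    obtain ⟨N, hNdef⟩ : ∃ N : ℝ, N = ν ^ (q - 3) := ⟨_, rfl⟩
    obtain ⟨B, hBdef⟩ : ∃ B : ℝ, B = (2:ℝ) ^ (q - 3) := ⟨_, rfl⟩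
    obtain ⟨V, hVdef⟩ : ∃ V : ℝ, V = (ν / 2) ^ (q - 3) := ⟨_, rfl⟩
    obtain ⟨S, hSdef⟩ : ∃ S : ℝ, S = s ^ (q - 3) := ⟨_, rfl⟩
    rw [← hNdef] at hN hδ2
    rw [← hBdef] at hB hδ2
    rw [← hVdef, ← hNdef, ← hBdef] at hν2
    rw [← hVdef] at hsp hV
    rw [← hSdef] at hkey hsp
    -- a - b ≤ (2-q) * V * δ
    have hab2 : a - b ≤ (2 - q) * V * δ := by
      have st1 : (2 - q) * S * (t - s) ≤ (2 - q) * V * (t - s) :=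
        mul_le_mul_of_nonneg_right (mul_le_mul_of_nonneg_left hsp h2q.le) hts0
      have st2 : (2 - q) * V * (t - s) ≤ (2 - q) * V * δ :=
        mul_le_mul_of_nonneg_left hts' (by positivity)
      linarith
    -- lam*q*(1-q)*(a-b) ≤ ϖ/2
    have hmain : lam * q * (1 - q) * (a - b) ≤ ϖ / 2 := by
      have hpos1 : (0:ℝ) ≤ lam * q * (1 - q) := by positivity
      have st1 : lam * q * (1 - q) * (a - b) ≤ lam * q * (1 - q) * ((2 - q) * V * δ) :=
        mul_le_mul_of_nonneg_left hab2 hpos1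
      have hC : (0:ℝ) < lam * q * (1 - q) * ((2 - q) * V) := by positivity
      have st2 : lam * q * (1 - q) * ((2 - q) * V * δ)
          ≤ lam * q * (1 - q) * ((2 - q) * V) * (B * ϖ / (2 * lam * q * (1 - q) * (2 - q) * N)) := by
        have := mul_le_mul_of_nonneg_left hδ2 hC.le
        linarith [this]
      have st3 : lam * q * (1 - q) * ((2 - q) * V) * (B * ϖ / (2 * lam * q * (1 - q) * (2 - q) * N))
          = ϖ / 2 := by
        rw [hν2]
        have hlamq : lam * q ≠ 0 := by positivity
        field_simp
      linarith
    have hid : lam * q * (q - 1) * a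
        = lam * q * (q - 1) * b - lam * q * (1 - q) * (a - b) := by ring
    linarith
end

section
/- Let s≥1, σ>0, b₁>1, b₂>0, ϱ∈(0,1/2], and let Φ:O→ℝ be twice continuously differentiable on an open convex set O⊆ℝ^s, with ‖∇²Φ(u')−∇²Φ(u'')‖ ≤ c̃₃‖u'−u''‖ (spectral norm) for all u',u''∈O. Let u∈O, r := ∇Φ(u) ≠ 0, H := ∇²Φ(u), ζ := max{−λ_min(H),0}, G := H + (b₁ζ + b₂‖r‖^σ)I (which is positive definite), and d := −G^{−1}r. Then for every t∈(0,1] such that the segment [u, u+td] lies in O and c̃₃ t² ‖d‖ ≤ b₂‖r‖^σ, the Armijo inequality Φ(u+td) ≤ Φ(u) + ϱ t ⟨r, d⟩ holds. -/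
set_option maxHeartbeats 1000000

open InnerProductSpace

section Aux

variable {F : Type*} [NormedAddCommGroup F] [InnerProductSpace ℝ F] [CompleteSpace F]

/-- The inverse Riesz map as a continuous `ℝ`-linear map. -/
noncomputable def stmt9Jmap : StrongDual ℝ F →L[ℝ] F :=
  { toFun := fun y => (toDual ℝ F).symm y
    map_add' := fun x y => by simp
    map_smul' := fun c x => by
      simp [LinearIsometryEquiv.map_smulₛₗ, starRingEnd_apply, star_trivial]
    cont := (toDual ℝ F).symm.continuous }

lemma stmt9_gradient_eq_Jmap (f : F → ℝ) :
    gradient f = fun x => stmt9Jmap (fderiv ℝ f x) := rfl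

lemma stmt9_diff_gradient {f : F → ℝ} {x : F} (hf : ContDiffAt ℝ 2 f x) :
    DifferentiableAt ℝ (gradient f) x := by
  rw [stmt9_gradient_eq_Jmap]
  exact (stmt9Jmap.differentiable.differentiableAt).comp x
    ((hf.fderiv_right (m := 1) (by norm_num)).differentiableAt one_ne_zero)

lemma stmt9_inner_gradient {f : F → ℝ} {x : F} (y : F) :
    (inner ℝ (gradient f x) y : ℝ) = fderiv ℝ f x y :=
  toDual_symm_apply

end Aux

/-- Armijo decrease along the regularized Newton direction.
With `r = ∇Φ(u) ≠ 0`, `H = ∇²Φ(u)`, `ζ = [−λ_min(H)]₊` (`λ_min` expressed as the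
infimum of the Rayleigh quotient over the unit sphere),
`G = H + (b₁ζ + b₂‖r‖^σ)I` and `d = −G⁻¹r`, every step size `t ∈ (0,1]` with
`[u, u+td] ⊆ O` and `c̃₃ t² ‖d‖ ≤ b₂‖r‖^σ` satisfies the Armijo inequality
`Φ(u+td) ≤ Φ(u) + ϱ t ⟨r, d⟩`. -/
theorem stmt9 (s : ℕ) (hs : 0 < s) (σ b₁ b₂ ϱ c₃ : ℝ)
    (hσ : 0 < σ) (hb₁ : 1 < b₁) (hb₂ : 0 < b₂) (hϱ0 : 0 < ϱ) (hϱ : ϱ ≤ 1 / 2)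
    (O : Set (EuclideanSpace ℝ (Fin s))) (hOopen : IsOpen O) (hOconv : Convex ℝ O)
    (Φ : EuclideanSpace ℝ (Fin s) → ℝ) (hΦ : ContDiffOn ℝ 2 Φ O)
    (hLip : ∀ v ∈ O, ∀ w ∈ O,
      ‖fderiv ℝ (gradient Φ) v - fderiv ℝ (gradient Φ) w‖ ≤ c₃ * ‖v - w‖)
    (u : EuclideanSpace ℝ (Fin s)) (hu : u ∈ O)
    (r : EuclideanSpace ℝ (Fin s)) (hr : r = gradient Φ u) (hr0 : r ≠ 0)
    (H : EuclideanSpace ℝ (Fin s) →L[ℝ] EuclideanSpace ℝ (Fin s))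
    (hH : H = fderiv ℝ (gradient Φ) u)
    (lmin ζ : ℝ)
    (hlmin : lmin = sInf {t : ℝ | ∃ v : EuclideanSpace ℝ (Fin s),
      ‖v‖ = 1 ∧ t = (inner ℝ v (H v) : ℝ)})
    (hζ : ζ = max (-lmin) 0)
    (G : EuclideanSpace ℝ (Fin s) →L[ℝ] EuclideanSpace ℝ (Fin s))
    (hG : G = H + (b₁ * ζ + b₂ * ‖r‖ ^ σ) • ContinuousLinearMap.id ℝ (EuclideanSpace ℝ (Fin s)))
    (d : EuclideanSpace ℝ (Fin s)) (hd : G d = -r) :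
    ∀ t : ℝ, 0 < t → t ≤ 1 → segment ℝ u (u + t • d) ⊆ O →
      c₃ * t ^ 2 * ‖d‖ ≤ b₂ * ‖r‖ ^ σ →
      Φ (u + t • d) ≤ Φ u + ϱ * t * (inner ℝ r d : ℝ) := by
  intro t ht0 ht1 hseg hstep
  classical
  -- basic facts
  have hd0 : d ≠ 0 := by
    intro h
    apply hr0
    have h2 : G d = 0 := by rw [h, map_zero]
    rw [hd] at h2
    simpa using h2.symm
  have hnd : (0:ℝ) < ‖d‖ := norm_pos_iff.mpr hd0
  set β : ℝ := b₂ * ‖r‖ ^ σ with hβdef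
  have hβ : 0 < β := mul_pos hb₂ (Real.rpow_pos_of_pos (norm_pos_iff.mpr hr0) σ)
  have hζ0 : 0 ≤ ζ := hζ ▸ le_max_right _ _
  have hζl : -ζ ≤ lmin := by
    rw [hζ]
    have := le_max_left (-lmin) (0:ℝ)
    linarith
  set μ : ℝ := b₁ * ζ + b₂ * ‖r‖ ^ σ with hμdef
  have hμβ : β ≤ μ := by
    have : 0 ≤ b₁ * ζ := mul_nonneg (by linarith) hζ0
    simp only [hμdef, hβdef]; linarith
  -- Rayleigh quotient lower bound
  have hlb : ∀ v : EuclideanSpace ℝ (Fin s), lmin * ‖v‖ ^ 2 ≤ (inner ℝ v (H v) : ℝ) := by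
    intro v
    rcases eq_or_ne v 0 with hv | hv
    · simp [hv]
    · have hnv : (0:ℝ) < ‖v‖ := norm_pos_iff.mpr hv
      set w : EuclideanSpace ℝ (Fin s) := ‖v‖⁻¹ • v with hw
      have hnw : ‖w‖ = 1 := by
        rw [hw, norm_smul, norm_inv, norm_norm, inv_mul_cancel₀ hnv.ne']
      have hbdd : BddBelow {t : ℝ | ∃ v : EuclideanSpace ℝ (Fin s),
          ‖v‖ = 1 ∧ t = (inner ℝ v (H v) : ℝ)} := by
        refine ⟨-‖H‖, ?_⟩
        rintro x ⟨v, hv1, rfl⟩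
        have h1 : |(inner ℝ v (H v) : ℝ)| ≤ ‖v‖ * ‖H v‖ := abs_real_inner_le_norm v (H v)
        have h2 : ‖H v‖ ≤ ‖H‖ * ‖v‖ := H.le_opNorm v
        rw [hv1] at h1 h2
        simp only [one_mul, mul_one] at h1 h2
        have := neg_abs_le (inner ℝ v (H v) : ℝ)
        linarith
      have hmem : (inner ℝ w (H w) : ℝ) ∈ {t : ℝ | ∃ v : EuclideanSpace ℝ (Fin s),
          ‖v‖ = 1 ∧ t = (inner ℝ v (H v) : ℝ)} := ⟨w, hnw, rfl⟩
      have hle : lmin ≤ (inner ℝ w (H w) : ℝ) := hlmin ▸ csInf_le hbdd hmem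
      have hcw : (inner ℝ w (H w) : ℝ) = ‖v‖⁻¹ * (‖v‖⁻¹ * (inner ℝ v (H v) : ℝ)) := by
        rw [hw, map_smul, real_inner_smul_left, real_inner_smul_right]
      rw [hcw] at hle
      have h3 := mul_le_mul_of_nonneg_left hle (le_of_lt (mul_pos hnv hnv))
      have hne : ‖v‖ ≠ 0 := hnv.ne'
      calc lmin * ‖v‖ ^ 2 = ‖v‖ * ‖v‖ * lmin := by ring
        _ ≤ ‖v‖ * ‖v‖ * (‖v‖⁻¹ * (‖v‖⁻¹ * (inner ℝ v (H v) : ℝ))) := h3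
        _ = (inner ℝ v (H v) : ℝ) := by field_simp
  -- key quantities
  set A : ℝ := (inner ℝ (H d) d : ℝ) with hAdef
  have hA : -(ζ * ‖d‖ ^ 2) ≤ A := by
    have h1 := hlb d
    have h2 : -ζ * ‖d‖ ^ 2 ≤ lmin * ‖d‖ ^ 2 :=
      mul_le_mul_of_nonneg_right hζl (sq_nonneg _)
    rw [hAdef, real_inner_comm]
    nlinarith
  have hGd : G d = H d + μ • d := by
    rw [hG]; simp
  set P : ℝ := (inner ℝ (G d) d : ℝ) with hPdef
  have hP : P = A + μ * ‖d‖ ^ 2 := by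
    rw [hPdef, hGd, inner_add_left, real_inner_smul_left,
      real_inner_self_eq_norm_sq, hAdef]
  have hrd : (inner ℝ r d : ℝ) = -P := by
    have : r = -(G d) := by rw [hd]; simp
    rw [this, inner_neg_left, hPdef]
  have hPβ : β * ‖d‖ ^ 2 ≤ P := by
    rw [hP]
    have hμ2 : μ = b₁ * ζ + β := rfl
    nlinarith [hA, mul_nonneg (sub_nonneg.mpr hb₁.le) (mul_nonneg hζ0 (sq_nonneg ‖d‖))]
  -- the path and membership
  set γ : ℝ → EuclideanSpace ℝ (Fin s) := fun τ => u + τ • d with hγdef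
  have hγ0 : γ 0 = u := by simp [hγdef]
  have hmem : ∀ τ ∈ Set.Icc (0:ℝ) t, γ τ ∈ O := by
    intro τ hτ
    apply hseg
    rw [segment_eq_image']
    refine ⟨τ / t, ⟨div_nonneg hτ.1 ht0.le, div_le_one_of_le₀ hτ.2 ht0.le⟩, ?_⟩
    simp only [add_sub_cancel_left, smul_smul, hγdef]
    rw [div_mul_cancel₀ _ ht0.ne']
  -- derivatives along the path
  have hγd : ∀ τ : ℝ, HasDerivAt γ d τ := by
    intro τ
    have h := ((hasDerivAt_id τ).smul_const d).const_add u
    simp only [one_smul, id] at h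
    exact h
  have hΦdiff : ∀ τ ∈ Set.Icc (0:ℝ) t, ContDiffAt ℝ 2 Φ (γ τ) := fun τ hτ =>
    hΦ.contDiffAt (hOopen.mem_nhds (hmem τ hτ))
  have hφ' : ∀ τ ∈ Set.Icc (0:ℝ) t,
      HasDerivAt (fun τ => Φ (γ τ)) ((inner ℝ (gradient Φ (γ τ)) d : ℝ)) τ := by
    intro τ hτ
    have h1 : HasFDerivAt Φ (fderiv ℝ Φ (γ τ)) (γ τ) :=
      ((hΦdiff τ hτ).differentiableAt (by norm_num)).hasFDerivAt
    have h2 := h1.comp_hasDerivAt τ (hγd τ)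
    rwa [← stmt9_inner_gradient d] at h2
  have hg' : ∀ τ ∈ Set.Icc (0:ℝ) t,
      HasDerivAt (fun τ => (inner ℝ (gradient Φ (γ τ)) d : ℝ))
        ((inner ℝ (fderiv ℝ (gradient Φ) (γ τ) d) d : ℝ)) τ := by
    intro τ hτ
    have h1 : HasFDerivAt (gradient Φ) (fderiv ℝ (gradient Φ) (γ τ)) (γ τ) :=
      (stmt9_diff_gradient (hΦdiff τ hτ)).hasFDerivAt
    have h2 : HasDerivAt (fun τ => gradient Φ (γ τ))
        (fderiv ℝ (gradient Φ) (γ τ) d) τ := h1.comp_hasDerivAt τ (hγd τ)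
    have h3 := h2.inner ℝ (hasDerivAt_const τ d)
    simpa using h3
  -- Lipschitz bound on the second derivative along the path
  have hB : ∀ τ ∈ Set.Icc (0:ℝ) t,
      (inner ℝ (fderiv ℝ (gradient Φ) (γ τ) d) d : ℝ) ≤ A + c₃ * ‖d‖ ^ 3 * τ := by
    intro τ hτ
    set B := fderiv ℝ (gradient Φ) (γ τ) with hBdef
    have h1 : ‖B - H‖ ≤ c₃ * (τ * ‖d‖) := by
      have := hLip (γ τ) (hmem τ hτ) u hu
      rw [← hH] at this
      have hnorm : ‖γ τ - u‖ = τ * ‖d‖ := by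
        simp only [hγdef, add_sub_cancel_left, norm_smul, Real.norm_eq_abs,
          abs_of_nonneg hτ.1]
      rwa [hnorm] at this
    have h2 : (inner ℝ ((B - H) d) d : ℝ) ≤ ‖B - H‖ * ‖d‖ * ‖d‖ := by
      calc (inner ℝ ((B - H) d) d : ℝ) ≤ ‖(B - H) d‖ * ‖d‖ :=
            real_inner_le_norm _ _
        _ ≤ ‖B - H‖ * ‖d‖ * ‖d‖ :=
            mul_le_mul_of_nonneg_right ((B - H).le_opNorm d) (norm_nonneg d)
    have h3 : (inner ℝ ((B - H) d) d : ℝ) = (inner ℝ (B d) d : ℝ) - A := by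
      rw [ContinuousLinearMap.sub_apply, inner_sub_left, hAdef]
    have h4 : ‖B - H‖ * ‖d‖ * ‖d‖ ≤ c₃ * (τ * ‖d‖) * ‖d‖ * ‖d‖ := by
      have := mul_le_mul_of_nonneg_right h1 (norm_nonneg d)
      exact mul_le_mul_of_nonneg_right this (norm_nonneg d)
    have h5 : c₃ * (τ * ‖d‖) * ‖d‖ * ‖d‖ = c₃ * ‖d‖ ^ 3 * τ := by ring
    linarith [h3 ▸ h2]
  -- first comparison function χ
  set g0 : ℝ := (inner ℝ r d : ℝ) with hg0def
  set χ : ℝ → ℝ := fun τ =>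
    (inner ℝ (gradient Φ (γ τ)) d : ℝ) - g0 - A * τ - c₃ * ‖d‖ ^ 3 / 2 * τ ^ 2 with hχdef
  have hχ' : ∀ τ ∈ Set.Icc (0:ℝ) t,
      HasDerivAt χ ((inner ℝ (fderiv ℝ (gradient Φ) (γ τ) d) d : ℝ)
        - A - c₃ * ‖d‖ ^ 3 / 2 * (2 * τ)) τ := by
    intro τ hτ
    have h1 : HasDerivAt (fun τ : ℝ => A * τ) A τ := by
      simpa using (hasDerivAt_id τ).const_mul A
    have h2 : HasDerivAt (fun τ : ℝ => c₃ * ‖d‖ ^ 3 / 2 * τ ^ 2)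
        (c₃ * ‖d‖ ^ 3 / 2 * (2 * τ)) τ := by
      simpa [mul_comm] using (hasDerivAt_pow 2 τ).const_mul (c₃ * ‖d‖ ^ 3 / 2)
    have h := (((hg' τ hτ).sub (hasDerivAt_const τ g0)).sub h1).sub h2
    simp only [sub_zero] at h
    exact h
  have hχanti : AntitoneOn χ (Set.Icc 0 t) := by
    apply antitoneOn_of_deriv_nonpos (convex_Icc 0 t)
    · intro τ hτ
      exact ((hχ' τ hτ).differentiableAt).continuousAt.continuousWithinAt
    · intro τ hτ
      rw [interior_Icc] at hτ
      exact ((hχ' τ (Set.mem_Icc_of_Ioo hτ)).differentiableAt).differentiableWithinAt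
    · intro τ hτ
      rw [interior_Icc] at hτ
      have hτ' := Set.mem_Icc_of_Ioo hτ
      rw [(hχ' τ hτ').deriv]
      have := hB τ hτ'
      nlinarith [this]
  have hχ0 : χ 0 = 0 := by
    simp [hχdef, hγ0, ← hr, hg0def]
    rw [hr, stmt9_inner_gradient, sub_self]
  have hχle : ∀ τ ∈ Set.Icc (0:ℝ) t, χ τ ≤ 0 := by
    intro τ hτ
    have := hχanti (Set.left_mem_Icc.mpr ht0.le) hτ hτ.1
    rwa [hχ0] at this
  -- second comparison function ψ
  set ψ : ℝ → ℝ := fun τ =>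
    Φ (γ τ) - Φ u - g0 * τ - A / 2 * τ ^ 2 - c₃ * ‖d‖ ^ 3 / 6 * τ ^ 3 with hψdef
  have hψ' : ∀ τ ∈ Set.Icc (0:ℝ) t, HasDerivAt ψ (χ τ) τ := by
    intro τ hτ
    have h1 : HasDerivAt (fun τ : ℝ => g0 * τ) g0 τ := by
      simpa using (hasDerivAt_id τ).const_mul g0
    have h2 : HasDerivAt (fun τ : ℝ => A / 2 * τ ^ 2) (A / 2 * (2 * τ)) τ := by
      simpa [mul_comm] using (hasDerivAt_pow 2 τ).const_mul (A / 2)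
    have h3 : HasDerivAt (fun τ : ℝ => c₃ * ‖d‖ ^ 3 / 6 * τ ^ 3)
        (c₃ * ‖d‖ ^ 3 / 6 * (3 * τ ^ 2)) τ := by
      simpa [mul_comm] using (hasDerivAt_pow 3 τ).const_mul (c₃ * ‖d‖ ^ 3 / 6)
    have h4 := ((((hφ' τ hτ).sub (hasDerivAt_const τ (Φ u))).sub h1).sub h2).sub h3
    have he : (inner ℝ (gradient Φ (γ τ)) d : ℝ) - 0 - g0 - A / 2 * (2 * τ)
        - c₃ * ‖d‖ ^ 3 / 6 * (3 * τ ^ 2) = χ τ := by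
      rw [hχdef]; ring
    rw [← he]
    exact h4
  have hψanti : AntitoneOn ψ (Set.Icc 0 t) := by
    apply antitoneOn_of_deriv_nonpos (convex_Icc 0 t)
    · intro τ hτ
      exact ((hψ' τ hτ).differentiableAt).continuousAt.continuousWithinAt
    · intro τ hτ
      rw [interior_Icc] at hτ
      exact ((hψ' τ (Set.mem_Icc_of_Ioo hτ)).differentiableAt).differentiableWithinAt
    · intro τ hτ
      rw [interior_Icc] at hτ
      have hτ' := Set.mem_Icc_of_Ioo hτ
      rw [(hψ' τ hτ').deriv]
      exact hχle τ hτ'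
  have hψ0 : ψ 0 = 0 := by simp [hψdef, hγ0]
  have htaylor : Φ (u + t • d) ≤ Φ u + g0 * t + A / 2 * t ^ 2
      + c₃ * ‖d‖ ^ 3 / 6 * t ^ 3 := by
    have h1 := hψanti (Set.left_mem_Icc.mpr ht0.le) (Set.right_mem_Icc.mpr ht0.le) ht0.le
    rw [hψ0] at h1
    have : γ t = u + t • d := rfl
    rw [hψdef] at h1
    simp only [this] at h1
    linarith
  -- final algebra
  have hErr : c₃ * ‖d‖ ^ 3 / 6 * t ^ 3 ≤ β * t * ‖d‖ ^ 2 / 6 := by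
    have h1 : c₃ * t ^ 2 * ‖d‖ ≤ β := hstep
    have h2 : 0 ≤ t * ‖d‖ ^ 2 := mul_nonneg ht0.le (sq_nonneg _)
    nlinarith
  have hcoef : 0 ≤ 1 - ϱ - t / 2 := by linarith
  have hgoal : g0 * t + A / 2 * t ^ 2 + c₃ * ‖d‖ ^ 3 / 6 * t ^ 3 ≤ ϱ * t * g0 := by
    have hArw : A = P - μ * ‖d‖ ^ 2 := by linarith [hP]
    rw [hrd, hArw]
    have key1 : 0 ≤ t * (1 - ϱ - t / 2) * (P - β * ‖d‖ ^ 2) :=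
      mul_nonneg (mul_nonneg ht0.le hcoef) (by linarith)
    have key2 : 0 ≤ (μ - β) * ‖d‖ ^ 2 * t ^ 2 / 2 :=
      div_nonneg (mul_nonneg (mul_nonneg (by linarith) (sq_nonneg _)) (sq_nonneg _)) (by norm_num)
    have key3 : 0 ≤ β * t * ‖d‖ ^ 2 := mul_nonneg (mul_nonneg hβ.le ht0.le) (sq_nonneg _)
    have key4 : 0 ≤ (1 / 2 - ϱ) * (β * t * ‖d‖ ^ 2) := mul_nonneg (by linarith) key3
    nlinarith [hErr, key1, key2, key3, key4]
  calc Φ (u + t • d) ≤ Φ u + g0 * t + A / 2 * t ^ 2 + c₃ * ‖d‖ ^ 3 / 6 * t ^ 3 := htaylor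
    _ ≤ Φ u + ϱ * t * g0 := by linarith
    _ = Φ u + ϱ * t * (inner ℝ r d : ℝ) := by rw [hg0def]
end

section
/- Let f:ℝ^m→ℝ be twice continuously differentiable, A∈ℝ^{m×n}, ψ(x):=f(Ax), λ>0, 0<q<1, g(x):=∑_{i=1}^n|x_i|^q, and μ̄>0, L̂>0, ĉ₂>0. Let x∈ℝⁿ∖{0} and let x̄ be a global minimizer over ℝⁿ of z ↦ ⟨∇ψ(x), z−x⟩ + (μ̄/2)‖z−x‖² + λg(z). Suppose sign(x_i)=sign(x̄_i) for all i, and set S:=supp(x). If ‖∇ψ(x)−∇ψ(x̄)‖ ≤ L̂‖x−x̄‖ and ‖∇²F_S(x̄_S + τ(x_S − x̄_S))‖ ≤ ĉ₂ for all τ∈[0,1], then ‖∇F_S(x_S)‖ ≤ (L̂ + μ̄ + ĉ₂)‖x − x̄‖. -/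
open InnerProductSpace

lemma aux_sign_pos {a b : ℝ} (h : Real.sign a = Real.sign b) (ha : 0 < a) : 0 < b := by
  rcases lt_trichotomy b 0 with hb | hb | hb
  · rw [Real.sign_of_pos ha, Real.sign_of_neg hb] at h; norm_num at h
  · rw [Real.sign_of_pos ha, hb, Real.sign_zero] at h; norm_num at h
  · exact hb

lemma aux_sign_neg {a b : ℝ} (h : Real.sign a = Real.sign b) (ha : a < 0) : b < 0 := by
  rcases lt_trichotomy b 0 with hb | hb | hb
  · exact hb
  · rw [Real.sign_of_neg ha, hb, Real.sign_zero] at h; norm_num at h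
  · rw [Real.sign_of_neg ha, Real.sign_of_pos hb] at h; norm_num at h

lemma absRpow_contDiffAt {q c : ℝ} (hc : c ≠ 0) {n : WithTop ℕ∞} (hn : n ≤ ((⊤ : ℕ∞) : WithTop ℕ∞)) :
    ContDiffAt ℝ n (fun s : ℝ => |s| ^ q) c :=
  (Real.contDiffAt_rpow_const_of_ne (abs_ne_zero.2 hc)).comp c
    ((contDiffAt_abs (n := ⊤) hc).of_le hn)

lemma two_le_top : (2 : WithTop ℕ∞) ≤ ((⊤ : ℕ∞) : WithTop ℕ∞) := by
  rw [show (2 : WithTop ℕ∞) = ((2:ℕ∞) : WithTop ℕ∞) from rfl]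
  exact WithTop.coe_le_coe.2 le_top

lemma absRpow_hasDerivAt {q c : ℝ} (hc : c ≠ 0) :
    HasDerivAt (fun s : ℝ => |s| ^ q) (q * |c| ^ (q - 1) * Real.sign c) c := by
  have h1 : HasDerivAt (fun s : ℝ => s ^ q) (q * |c| ^ (q - 1)) |c| :=
    Real.hasDerivAt_rpow_const (Or.inl (abs_ne_zero.2 hc))
  have h2 : HasDerivAt (fun s : ℝ => |s|) ((SignType.sign c : ℝ)) c := hasDerivAt_abs hc
  have h3 := h1.comp c h2
  have hs : (SignType.sign c : ℝ) = Real.sign c := by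
    rcases lt_trichotomy c 0 with h | h | h
    · simp [Real.sign_of_neg h, h]
    · exact absurd h hc
    · simp [Real.sign_of_pos h, h, not_lt.2 h.le]
  rw [← hs]; exact h3

lemma aux_sum_hasDerivAt {ι : Type*} [Fintype ι] [DecidableEq ι] {q : ℝ}
    (w : ι → ℝ) (i : ι) (hw : w i ≠ 0) :
    HasDerivAt (fun t : ℝ => ∑ j, |w j + t * (if j = i then (1:ℝ) else 0)| ^ q)
      (q * |w i| ^ (q - 1) * Real.sign (w i)) 0 := by
  have h : ∀ j ∈ Finset.univ, HasDerivAt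
      (fun t : ℝ => |w j + t * (if j = i then (1:ℝ) else 0)| ^ q)
      (if j = i then q * |w i| ^ (q - 1) * Real.sign (w i) else 0) (0:ℝ) := by
    intro j _
    by_cases hj : j = i
    · subst hj
      simp only [if_pos rfl, mul_one]
      have hline : HasDerivAt (fun t : ℝ => w j + t) 1 0 := by
        simpa using (hasDerivAt_id (0:ℝ)).const_add (w j)
      have h0 : HasDerivAt (fun s : ℝ => |s| ^ q) (q * |w j| ^ (q - 1) * Real.sign (w j))
          ((fun t : ℝ => w j + t) 0) := by simpa using absRpow_hasDerivAt (q := q) hw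
      have := h0.comp 0 hline
      simp only [if_true, mul_one] at this ⊢
      exact this
    · simp only [if_neg hj, mul_zero, add_zero]
      exact hasDerivAt_const 0 _
  have := HasDerivAt.fun_sum h
  simpa using this

lemma gradient_coord {ι : Type*} [Fintype ι] [DecidableEq ι] (F : EuclideanSpace ℝ ι → ℝ)
    (u : EuclideanSpace ℝ ι) (hd : DifferentiableAt ℝ F u) (i : ι) :
    gradient F u i = fderiv ℝ F u (EuclideanSpace.single i 1) := by
  have h : fderiv ℝ F u = (InnerProductSpace.toDual ℝ _) (gradient F u) :=
    (hd.hasGradientAt.hasFDerivAt).fderiv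
  rw [h, InnerProductSpace.toDual_apply_apply, EuclideanSpace.inner_single_right]
  simp

lemma norm_restrict_le {n : ℕ} (S : Finset (Fin n)) (v : EuclideanSpace ℝ (Fin n))
    (vS : EuclideanSpace ℝ {i // i ∈ S}) (h : ∀ i, vS i = v i.1) : ‖vS‖ ≤ ‖v‖ := by
  rw [EuclideanSpace.norm_eq, EuclideanSpace.norm_eq]
  apply Real.sqrt_le_sqrt
  calc ∑ i : {i // i ∈ S}, ‖vS i‖^2 = ∑ i ∈ S, ‖v i‖^2 := by
        rw [← Finset.sum_coe_sort S (fun i => ‖v i‖^2)]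
        exact Finset.sum_congr rfl fun i _ => by rw [h i]
    _ ≤ ∑ i, ‖v i‖^2 := Finset.sum_le_sum_of_subset_of_nonneg (Finset.subset_univ S)
        (fun _ _ _ => by positivity)

noncomputable def matCLM {m : ℕ} {ι : Type*} [Fintype ι] (B : Matrix (Fin m) ι ℝ) :
    EuclideanSpace ℝ ι →L[ℝ] EuclideanSpace ℝ (Fin m) :=
  LinearMap.toContinuousLinearMap
    (((WithLp.linearEquiv 2 ℝ (Fin m → ℝ)).symm.toLinearMap).comp
      ((B.mulVecLin).comp (WithLp.linearEquiv 2 ℝ (ι → ℝ)).toLinearMap))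

set_option maxHeartbeats 2000000

/-- bound on the smooth stationarity residual by the
proximal-gradient residual: if `x̄` is the proximal-gradient point at `x` with
step `μ̄`, `sign(x) = sign(x̄)`, `S = supp(x)`, `∇ψ` satisfies
`‖∇ψ(x)−∇ψ(x̄)‖ ≤ L̂‖x−x̄‖` and the Hessian of `F_S` along the segment from
`x̄_S` to `x_S` is bounded by `ĉ₂`, then
`‖∇F_S(x_S)‖ ≤ (L̂ + μ̄ + ĉ₂)‖x − x̄‖`. -/
theorem stmt10 (m n : ℕ) (q lam μb Lhat c₂ : ℝ) (hq0 : 0 < q) (hq1 : q < 1)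
    (hlam : 0 < lam) (hμb : 0 < μb) (hLhat : 0 < Lhat) (hc₂ : 0 < c₂)
    (f : EuclideanSpace ℝ (Fin m) → ℝ) (hf : ContDiff ℝ 2 f)
    (A : Matrix (Fin m) (Fin n) ℝ)
    (ψ : EuclideanSpace ℝ (Fin n) → ℝ) (hψ : ∀ y, ψ y = f (WithLp.toLp 2 (A.mulVec y)))
    (x xbar : EuclideanSpace ℝ (Fin n)) (hx : x ≠ 0)
    (hmin : ∀ z : EuclideanSpace ℝ (Fin n),
      (inner ℝ (gradient ψ x) (xbar - x) : ℝ) + (μb / 2) * ‖xbar - x‖ ^ 2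
          + lam * ∑ i, |xbar i| ^ q ≤
        (inner ℝ (gradient ψ x) (z - x) : ℝ) + (μb / 2) * ‖z - x‖ ^ 2
          + lam * ∑ i, |z i| ^ q)
    (hsign : ∀ i, Real.sign (x i) = Real.sign (xbar i))
    (S : Finset (Fin n)) (hSdef : ∀ i, i ∈ S ↔ x i ≠ 0)
    (AS : Matrix (Fin m) {i // i ∈ S} ℝ) (hAS : ∀ j i, AS j i = A j i.1)
    (xS xbarS : EuclideanSpace ℝ {i // i ∈ S})
    (hxS : ∀ i, xS i = x i.1) (hxbarS : ∀ i, xbarS i = xbar i.1)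
    (FS : EuclideanSpace ℝ {i // i ∈ S} → ℝ)
    (hFS : ∀ u, FS u = f (WithLp.toLp 2 (AS.mulVec u)) + lam * ∑ i, |u i| ^ q)
    (hgradLip : ‖gradient ψ x - gradient ψ xbar‖ ≤ Lhat * ‖x - xbar‖)
    (hHess : ∀ τ ∈ Set.Icc (0:ℝ) 1,
      ‖fderiv ℝ (gradient FS) (xbarS + τ • (xS - xbarS))‖ ≤ c₂) :
    ‖gradient FS xS‖ ≤ (Lhat + μb + c₂) * ‖x - xbar‖ := by
  classical
  set g := gradient ψ x with hg
  have hxbar_ne : ∀ i ∈ S, xbar i ≠ 0 := by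
    intro i hi
    have hxne : x i ≠ 0 := (hSdef i).1 hi
    rcases hxne.lt_or_gt with hneg | hpos
    · exact ne_of_lt (aux_sign_neg (hsign i) hneg)
    · exact ne_of_gt (aux_sign_pos (hsign i) hpos)
  -- ψ as a composition
  have hψfun : ψ = fun y => f (matCLM A y) := funext fun y => hψ y
  have hone_le_two : (1 : WithTop ℕ∞) ≤ 2 := by norm_num
  have hfdiff : Differentiable ℝ f := hf.differentiable (by norm_num)
  have hψgrad : ∀ (y : EuclideanSpace ℝ (Fin n)) (i : Fin n),
      gradient ψ y i = fderiv ℝ f (matCLM A y) (matCLM A (EuclideanSpace.single i 1)) := by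
    intro y i
    have hdψ : DifferentiableAt ℝ ψ y := by
      rw [hψfun]; exact (hfdiff _).comp y (matCLM A).differentiableAt
    rw [gradient_coord ψ y hdψ i]
    have hfd : HasFDerivAt ψ ((fderiv ℝ f (matCLM A y)).comp (matCLM A)) y := by
      rw [hψfun]
      exact (hfdiff _).hasFDerivAt.comp y (matCLM A).hasFDerivAt
    rw [hfd.fderiv]; rfl
  -- FS as a composition
  have hFSfun : FS = fun u => f (matCLM AS u) + lam * ∑ i, |u i| ^ q := funext fun u => hFS u
  have hFSc2 : ∀ u : EuclideanSpace ℝ {i // i ∈ S}, (∀ i, u i ≠ 0) → ContDiffAt ℝ 2 FS u := by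
    intro u hu
    rw [hFSfun]
    apply ContDiffAt.add
    · exact (hf.comp (matCLM AS).contDiff).contDiffAt
    · apply ContDiffAt.mul contDiffAt_const
      apply ContDiffAt.sum
      intro i _
      have hev : ContDiffAt ℝ 2 (fun v : EuclideanSpace ℝ {i // i ∈ S} => v i) u := by
        have : ContDiff ℝ 2 (fun v : EuclideanSpace ℝ {i // i ∈ S} => v i) :=
          (EuclideanSpace.proj (𝕜 := ℝ) i).contDiff
        exact this.contDiffAt
      exact (absRpow_contDiffAt (hu i) two_le_top).comp u hev
  -- gradient formula for FS
  have hgradFS : ∀ (u : EuclideanSpace ℝ {i // i ∈ S}), (∀ j, u j ≠ 0) → ∀ i,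
      gradient FS u i = fderiv ℝ f (matCLM AS u) (matCLM AS (EuclideanSpace.single i 1))
        + lam * (q * |u i| ^ (q - 1) * Real.sign (u i)) := by
    intro u hu i
    have hdiff : DifferentiableAt ℝ FS u := (hFSc2 u hu).differentiableAt (by norm_num)
    rw [gradient_coord FS u hdiff i]
    set e := EuclideanSpace.single i (1:ℝ) with he
    have hline : HasDerivAt (fun t : ℝ => u + t • e) e 0 := by
      simpa using ((hasDerivAt_id (0:ℝ)).smul_const e).const_add u
    have h1 : HasDerivAt (fun t : ℝ => FS (u + t • e)) (fderiv ℝ FS u e) 0 := by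
      have h0 : HasFDerivAt FS (fderiv ℝ FS u) (u + (0:ℝ) • e) := by
        rw [show u + (0:ℝ) • e = u by simp]; exact hdiff.hasFDerivAt
      exact h0.comp_hasDerivAt 0 hline
    have hlineT : HasDerivAt (fun t : ℝ => matCLM AS (u + t • e)) (matCLM AS e) 0 :=
      (matCLM AS).hasFDerivAt.comp_hasDerivAt 0 hline
    have hfu' : HasFDerivAt f (fderiv ℝ f (matCLM AS u))
        ((fun t : ℝ => matCLM AS (u + t • e)) 0) := by
      simp only [zero_smul, add_zero]
      exact (hfdiff _).hasFDerivAt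
    have hA1 : HasDerivAt (fun t : ℝ => f (matCLM AS (u + t • e)))
        (fderiv ℝ f (matCLM AS u) (matCLM AS e)) 0 := hfu'.comp_hasDerivAt 0 hlineT
    have hB := (aux_sum_hasDerivAt (q := q) (fun j => u j) i (hu i)).const_mul lam
    have heq : (fun t : ℝ => FS (u + t • e))
        = fun t => f (matCLM AS (u + t • e))
            + lam * ∑ j, |u j + t * (if j = i then (1:ℝ) else 0)| ^ q := by
      funext t
      rw [hFS]
      congr 1
      congr 1
      apply Finset.sum_congr rfl
      intro j _
      congr 2
      simp [he, EuclideanSpace.single_apply, PiLp.add_apply, PiLp.smul_apply, smul_eq_mul]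
    have h2 : HasDerivAt (fun t : ℝ => FS (u + t • e))
        (fderiv ℝ f (matCLM AS u) (matCLM AS e)
          + lam * (q * |u i| ^ (q - 1) * Real.sign (u i))) 0 := by
      rw [heq]
      exact hA1.add hB
    exact h1.unique h2
  -- first-order optimality of xbar
  have hopt : ∀ i ∈ S, g i + μb * (xbar i - x i)
      + lam * (q * |xbar i| ^ (q - 1) * Real.sign (xbar i)) = 0 := by
    intro i hi
    have hxb : xbar i ≠ 0 := hxbar_ne i hi
    set e := EuclideanSpace.single i (1:ℝ) with he
    set φ : ℝ → ℝ := fun t => (inner ℝ g ((xbar - x) + t • e) : ℝ)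
      + (μb / 2) * ‖(xbar - x) + t • e‖ ^ 2
      + lam * ∑ j, |xbar j + t * (if j = i then (1:ℝ) else 0)| ^ q with hφ
    have hzcoord : ∀ (t : ℝ) (j : Fin n),
        (xbar + t • e) j = xbar j + t * (if j = i then (1:ℝ) else 0) := by
      intro t j
      simp [he, EuclideanSpace.single_apply, PiLp.add_apply, PiLp.smul_apply, smul_eq_mul]
    have hmin' : ∀ t, φ 0 ≤ φ t := by
      intro t
      have h0 := hmin (xbar + t • e)
      have e1 : (xbar + t • e) - x = (xbar - x) + t • e := by abel
      have hL : φ 0 = (inner ℝ g (xbar - x) : ℝ) + (μb / 2) * ‖xbar - x‖ ^ 2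
          + lam * ∑ j, |xbar j| ^ q := by
        simp [hφ]
      have hsum : ∑ j, |(xbar + t • e) j| ^ q
          = ∑ j, |xbar j + t * (if j = i then (1:ℝ) else 0)| ^ q :=
        Finset.sum_congr rfl fun j _ => by rw [hzcoord t j]
      rw [e1, hsum] at h0
      rw [hL]
      exact h0
    have hline : HasDerivAt (fun t : ℝ => (xbar - x) + t • e) e 0 := by
      simpa using ((hasDerivAt_id (0:ℝ)).smul_const e).const_add (xbar - x)
    have ht1 : HasDerivAt (fun t : ℝ => (inner ℝ g ((xbar - x) + t • e) : ℝ)) (g i) 0 := by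
      have := (hasDerivAt_const (0:ℝ) g).inner ℝ hline
      simpa [he, EuclideanSpace.inner_single_right] using this
    have ht2 : HasDerivAt (fun t : ℝ => (μb / 2) * ‖(xbar - x) + t • e‖ ^ 2)
        (μb * (xbar i - x i)) 0 := by
      have h2 := (hline.inner ℝ hline).const_mul (μb / 2)
      have heq2 : (fun t : ℝ => (μb / 2) * (inner ℝ ((xbar - x) + t • e) ((xbar - x) + t • e) : ℝ))
          = fun t : ℝ => (μb / 2) * ‖(xbar - x) + t • e‖ ^ 2 := by
        funext t; rw [real_inner_self_eq_norm_sq]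
      rw [heq2] at h2
      refine h2.congr_deriv ?_
      simp [he, EuclideanSpace.inner_single_right, EuclideanSpace.inner_single_left,
        PiLp.sub_apply]
      ring
    have ht3 := (aux_sum_hasDerivAt (q := q) (fun j => xbar j) i hxb).const_mul lam
    have hφderiv : HasDerivAt φ (g i + μb * (xbar i - x i)
        + lam * (q * |xbar i| ^ (q - 1) * Real.sign (xbar i))) 0 :=
      (ht1.add ht2).add ht3
    exact (IsLocalMin.hasDerivAt_eq_zero (Filter.Eventually.of_forall hmin') hφderiv)
  -- compatibility of matCLM AS with matCLM A
  have hxbar0 : ∀ i, i ∉ S → xbar i = 0 := by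
    intro i hi
    have hx0 : x i = 0 := by
      by_contra hne; exact hi ((hSdef i).2 hne)
    have hs := hsign i
    rw [hx0, Real.sign_zero] at hs
    exact Real.sign_eq_zero_iff.1 hs.symm
  have hTM1 : matCLM AS xbarS = matCLM A xbar := by
    ext j
    show (AS.mulVec xbarS.ofLp) j = (A.mulVec xbar.ofLp) j
    simp only [Matrix.mulVec, dotProduct]
    calc ∑ k : {i // i ∈ S}, AS j k * xbarS k = ∑ k : {i // i ∈ S}, A j k.1 * xbar k.1 := by
          apply Finset.sum_congr rfl; intro k _; rw [hAS, hxbarS]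
      _ = ∑ k ∈ S, A j k * xbar k := Finset.sum_coe_sort S (fun k => A j k * xbar k)
      _ = ∑ k, A j k * xbar k := by
          apply Finset.sum_subset (Finset.subset_univ S)
          intro k _ hk
          rw [hxbar0 k hk, mul_zero]
  have hTM2 : ∀ (i : {i // i ∈ S}),
      matCLM AS (EuclideanSpace.single i (1:ℝ)) = matCLM A (EuclideanSpace.single i.1 1) := by
    intro i
    ext j
    show (AS.mulVec (EuclideanSpace.single i (1:ℝ)).ofLp) j = (A.mulVec (EuclideanSpace.single i.1 (1:ℝ)).ofLp) j
    simp only [Matrix.mulVec, dotProduct]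
    rw [show ∑ k : {i // i ∈ S}, AS j k * (EuclideanSpace.single i (1:ℝ)) k = AS j i by
      simp [EuclideanSpace.single_apply, mul_ite, Finset.sum_ite_eq']]
    rw [show ∑ k, A j k * (EuclideanSpace.single i.1 (1:ℝ)) k = A j i.1 by
      simp [EuclideanSpace.single_apply, mul_ite, Finset.sum_ite_eq']]
    exact hAS j i
  -- the key identity for the gradient of FS at xbarS
  have hxbarS_ne : ∀ i : {i // i ∈ S}, xbarS i ≠ 0 := fun i => by
    rw [hxbarS]; exact hxbar_ne i.1 i.2
  have hkey : ∀ i : {i // i ∈ S}, gradient FS xbarS i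
      = (gradient ψ xbar i.1 - g i.1) + μb * (x i.1 - xbar i.1) := by
    intro i
    rw [hgradFS xbarS hxbarS_ne i, hTM1, hTM2 i, ← hψgrad xbar i.1, hxbarS i]
    have := hopt i.1 i.2
    linarith
  -- norm bound on gradient FS xbarS
  set w : EuclideanSpace ℝ (Fin n) := (gradient ψ xbar - g) + μb • (x - xbar) with hwdef
  have hw : ∀ i : {i // i ∈ S}, gradient FS xbarS i = w i.1 := by
    intro i
    rw [hkey i]
    simp [hwdef, PiLp.add_apply, PiLp.sub_apply, PiLp.smul_apply, smul_eq_mul]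
  have hnorm1 : ‖gradient FS xbarS‖ ≤ ‖w‖ := norm_restrict_le S w _ hw
  have hnormw : ‖w‖ ≤ (Lhat + μb) * ‖x - xbar‖ := by
    have h1 : ‖w‖ ≤ ‖gradient ψ xbar - g‖ + ‖μb • (x - xbar)‖ := norm_add_le _ _
    have h2 : ‖gradient ψ xbar - g‖ = ‖g - gradient ψ xbar‖ := norm_sub_rev _ _
    have h3 : ‖μb • (x - xbar)‖ = μb * ‖x - xbar‖ := by
      rw [norm_smul, Real.norm_eq_abs, abs_of_pos hμb]
    rw [h2, h3] at h1
    have h4 : ‖g - gradient ψ xbar‖ ≤ Lhat * ‖x - xbar‖ := hgradLip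
    linarith [h1, h4]
  -- mean value bound along the segment
  have hseg_ne : ∀ u ∈ segment ℝ xbarS xS, ∀ i, u i ≠ 0 := by
    intro u hu i
    rw [segment_eq_image'] at hu
    obtain ⟨τ, hτ, rfl⟩ := hu
    obtain ⟨hτ0, hτ1⟩ := hτ
    show (xbarS + τ • (xS - xbarS)) i ≠ 0
    have hco : (xbarS + τ • (xS - xbarS)) i = xbar i.1 + τ * (x i.1 - xbar i.1) := by
      simp [PiLp.add_apply, PiLp.smul_apply, PiLp.sub_apply, hxS, hxbarS, smul_eq_mul]
    rw [hco]
    have hxne : x i.1 ≠ 0 := (hSdef i.1).1 i.2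
    rcases hxne.lt_or_gt with hneg | hpos
    · have hb := aux_sign_neg (hsign i.1) hneg
      have : xbar i.1 + τ * (x i.1 - xbar i.1) < 0 := by
        rcases eq_or_lt_of_le hτ0 with h | h
        · rw [← h]; simpa using hb
        · nlinarith [mul_nonneg (by linarith : (0:ℝ) ≤ 1 - τ) (by linarith : (0:ℝ) ≤ -xbar i.1),
            mul_pos h (by linarith : (0:ℝ) < -x i.1)]
      exact ne_of_lt this
    · have hb := aux_sign_pos (hsign i.1) hpos
      have : 0 < xbar i.1 + τ * (x i.1 - xbar i.1) := by
        rcases eq_or_lt_of_le hτ0 with h | h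
        · rw [← h]; simpa using hb
        · nlinarith [mul_nonneg (by linarith : (0:ℝ) ≤ 1 - τ) hb.le, mul_pos h hpos]
      exact ne_of_gt this
  have hGdiff : ∀ u ∈ segment ℝ xbarS xS, DifferentiableAt ℝ (gradient FS) u := by
    intro u hu
    have h1 : ContDiffAt ℝ 1 (fderiv ℝ FS) u :=
      (hFSc2 u (hseg_ne u hu)).fderiv_right (by norm_num)
    have h2 : DifferentiableAt ℝ (fderiv ℝ FS) u := h1.differentiableAt one_ne_zero
    have h3 : gradient FS = fun v =>
        ((InnerProductSpace.toDual ℝ (EuclideanSpace ℝ {i // i ∈ S})).symm.toContinuousLinearEquiv :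
          _ ≃L[ℝ] _) (fderiv ℝ FS v) := rfl
    rw [h3]
    exact (ContinuousLinearEquiv.differentiableAt _).comp u h2
  have hMVT : ‖gradient FS xS - gradient FS xbarS‖ ≤ c₂ * ‖xS - xbarS‖ := by
    apply Convex.norm_image_sub_le_of_norm_fderiv_le hGdiff
      (fun u hu => ?_) (convex_segment _ _) (left_mem_segment ℝ _ _) (right_mem_segment ℝ _ _)
    rw [segment_eq_image'] at hu
    obtain ⟨τ, hτ, rfl⟩ := hu
    exact hHess τ hτ
  have hnormS : ‖xS - xbarS‖ ≤ ‖x - xbar‖ := by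
    apply norm_restrict_le S (x - xbar)
    intro i
    simp [PiLp.sub_apply, hxS, hxbarS]
  -- conclusion
  have htri : ‖gradient FS xS‖ ≤ ‖gradient FS xbarS‖ + ‖gradient FS xS - gradient FS xbarS‖ := by
    have := norm_add_le (gradient FS xbarS) (gradient FS xS - gradient FS xbarS)
    simpa using this
  have hc2b : c₂ * ‖xS - xbarS‖ ≤ c₂ * ‖x - xbar‖ :=
    mul_le_mul_of_nonneg_left hnormS hc₂.le
  calc ‖gradient FS xS‖ ≤ ‖gradient FS xbarS‖ + ‖gradient FS xS - gradient FS xbarS‖ := htri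
    _ ≤ (Lhat + μb) * ‖x - xbar‖ + c₂ * ‖x - xbar‖ := by linarith [hnorm1, hnormw, hMVT, hc2b]
    _ = (Lhat + μb + c₂) * ‖x - xbar‖ := by ring
end

section
/- Let {x^k}_{k∈ℕ} ⊂ ℝⁿ, let {F_k}_{k∈ℕ} ⊂ ℝ be strictly decreasing with F_k → F*, and set e_k := F_k − F* (so e_k > 0 for all k). Let η>0 and let φ:[0,η)→[0,∞) be continuous and concave with φ(0)=0, φ continuously differentiable on (0,η) and φ'(s)>0 for all s∈(0,η). Let a>0 and let {r_k} be nonnegative reals, and suppose there is k̂∈ℕ such that for all k ≥ k̂: e_k < η, F_k − F_{k+1} ≥ a·r_k·‖x^{k+1} − x^k‖, and φ'(e_k)·r_k ≥ 1. Then ∑_{k=k̂}^∞ ‖x^{k+1} − x^k‖ ≤ φ(e_{k̂})/a < ∞; in particular {x^k} has finite length and converges to some point x*∈ℝⁿ. -/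
/-- abstract KL finite-length argument: if the strictly decreasing
values `F_k → F*` satisfy, for all `k ≥ k̂`, the sufficient decrease
`F_k − F_{k+1} ≥ a r_k ‖x^{k+1}−x^k‖` and the KL inequality `φ'(e_k) r_k ≥ 1`
with `e_k = F_k − F* < η`, where `φ` is a concave desingularizing function on
`[0,η)`, then the iterates have finite length, the tail sum is bounded by
`φ(e_k̂)/a`, and `x^k` converges. -/
theorem stmt12 (n : ℕ) (x : ℕ → EuclideanSpace ℝ (Fin n))
    (F : ℕ → ℝ) (hFanti : StrictAnti F) (Fstar : ℝ)
    (hFlim : Filter.Tendsto F Filter.atTop (nhds Fstar))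
    (η a : ℝ) (hη : 0 < η) (ha : 0 < a)
    (φ φ' : ℝ → ℝ) (hφ0 : φ 0 = 0)
    (hφnonneg : ∀ s ∈ Set.Ico (0:ℝ) η, 0 ≤ φ s)
    (hφcont : ContinuousOn φ (Set.Ico 0 η))
    (hφconc : ConcaveOn ℝ (Set.Ico 0 η) φ)
    (hφderiv : ∀ s ∈ Set.Ioo (0:ℝ) η, HasDerivAt φ (φ' s) s)
    (hφ'pos : ∀ s ∈ Set.Ioo (0:ℝ) η, 0 < φ' s)
    (r : ℕ → ℝ) (hr : ∀ k, 0 ≤ r k)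
    (khat : ℕ)
    (hmain : ∀ k ≥ khat, F k - Fstar < η ∧
      a * r k * ‖x (k + 1) - x k‖ ≤ F k - F (k + 1) ∧
      1 ≤ φ' (F k - Fstar) * r k) :
    Summable (fun k => ‖x (k + 1) - x k‖) ∧
    (∑' k : ℕ, ‖x (khat + k + 1) - x (khat + k)‖) ≤ φ (F khat - Fstar) / a ∧
    ∃ xstar : EuclideanSpace ℝ (Fin n),
      Filter.Tendsto x Filter.atTop (nhds xstar) := by
  -- `F k > Fstar` for all `k`
  have hFgt : ∀ k, Fstar < F k := by
    intro k
    have hle : Fstar ≤ F (k + 1) :=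
      le_of_tendsto hFlim (Filter.eventually_atTop.2
        ⟨k + 1, fun m hm => hFanti.antitone hm⟩)
    exact lt_of_le_of_lt hle (hFanti (Nat.lt_succ_self k))
  -- key per-step estimate
  have key : ∀ k, khat ≤ k →
      a * ‖x (k + 1) - x k‖ ≤ φ (F k - Fstar) - φ (F (k + 1) - Fstar) := by
    intro k hk
    obtain ⟨hlt, hdec, hkl⟩ := hmain k hk
    set e := F k - Fstar with he_def
    set e' := F (k + 1) - Fstar with he'_def
    have he : 0 < e := sub_pos.2 (hFgt k)
    have he' : 0 < e' := sub_pos.2 (hFgt (k + 1))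
    have he'lt : e' < e := sub_lt_sub_right (hFanti (Nat.lt_succ_self k)) _
    have hφ'e : 0 < φ' e := hφ'pos e ⟨he, hlt⟩
    have hrpos : 0 < r k := by
      rcases (hr k).lt_or_eq with h | h
      · exact h
      · exfalso; rw [← h] at hkl; simp at hkl; linarith
    have h1 : 1 / r k ≤ φ' e := by
      rw [div_le_iff₀ hrpos]; linarith
    have hdiff : F k - F (k + 1) = e - e' := by rw [he_def, he'_def]; ring
    have hd : a * r k * ‖x (k + 1) - x k‖ ≤ e - e' := hdiff ▸ hdec
    have hΔ : a * ‖x (k + 1) - x k‖ ≤ φ' e * (e - e') := by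
      have h2 : a * ‖x (k + 1) - x k‖ = (a * r k * ‖x (k + 1) - x k‖) * (1 / r k) := by
        field_simp
      rw [h2]
      have hnn : 0 ≤ a * r k * ‖x (k + 1) - x k‖ :=
        mul_nonneg (mul_nonneg ha.le (hr k)) (norm_nonneg _)
      calc (a * r k * ‖x (k + 1) - x k‖) * (1 / r k)
          ≤ (e - e') * φ' e := by
            apply mul_le_mul hd h1 (by positivity) (by linarith)
        _ = φ' e * (e - e') := mul_comm _ _
    -- concavity: φ' e ≤ slope φ e' e
    have hslope : φ' e ≤ (φ e - φ e') / (e - e') := by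
      have := hφconc.le_slope_of_hasDerivAt (x := e') (y := e)
        ⟨he'.le, he'lt.trans hlt⟩ ⟨he.le, hlt⟩ he'lt (hφderiv e ⟨he, hlt⟩)
      rwa [slope_def_field] at this
    have hgap : φ' e * (e - e') ≤ φ e - φ e' := by
      have hpos : (0:ℝ) < e - e' := by linarith
      calc φ' e * (e - e') ≤ ((φ e - φ e') / (e - e')) * (e - e') :=
            mul_le_mul_of_nonneg_right hslope hpos.le
        _ = φ e - φ e' := div_mul_cancel₀ _ hpos.ne'
    linarith
  -- nonnegativity of φ at the errors
  have hφnn : ∀ k, khat ≤ k → 0 ≤ φ (F k - Fstar) := by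
    intro k hk
    exact hφnonneg _ ⟨(sub_pos.2 (hFgt k)).le, (hmain k hk).1⟩
  -- partial-sum bound
  have hpartial : ∀ N, ∑ i ∈ Finset.range N, ‖x (khat + i + 1) - x (khat + i)‖
      ≤ φ (F khat - Fstar) / a := by
    intro N
    have htel : ∑ i ∈ Finset.range N,
        (φ (F (khat + i) - Fstar) - φ (F (khat + i + 1) - Fstar))
        = φ (F khat - Fstar) - φ (F (khat + N) - Fstar) := by
      exact Finset.sum_range_sub' (fun i => φ (F (khat + i) - Fstar)) N
    have hsum : ∑ i ∈ Finset.range N, a * ‖x (khat + i + 1) - x (khat + i)‖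
        ≤ φ (F khat - Fstar) - φ (F (khat + N) - Fstar) := by
      rw [← htel]
      exact Finset.sum_le_sum fun i _ => key (khat + i) (Nat.le_add_right _ _)
    have h2 : a * ∑ i ∈ Finset.range N, ‖x (khat + i + 1) - x (khat + i)‖
        ≤ φ (F khat - Fstar) := by
      rw [Finset.mul_sum]
      have := hφnn (khat + N) (Nat.le_add_right _ _)
      linarith
    rw [le_div_iff₀ ha]
    linarith
  -- summability of the tail
  have hsumtail : Summable (fun i => ‖x (khat + i + 1) - x (khat + i)‖) :=
    summable_of_sum_range_le (fun i => norm_nonneg _) hpartial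
  have hsummable : Summable (fun k => ‖x (k + 1) - x k‖) := by
    rw [← summable_nat_add_iff khat]
    exact hsumtail.congr fun i => by rw [add_comm i khat]
  refine ⟨hsummable, ?_, ?_⟩
  · exact Summable.tsum_le_of_sum_range_le hsumtail hpartial
  · have hcauchy : CauchySeq x := by
      apply cauchySeq_of_summable_dist
      exact hsummable.congr fun k => by rw [dist_eq_norm, norm_sub_rev]
    exact cauchySeq_tendsto_of_complete hcauchy
end

section
/- Let {Δ_k}_{k∈ℕ} ⊂ (0,∞), let {s_k} be nonnegative reals, and let c>0, γ̂>0, c̃₂>0 be constants such that for every k: c̃₂·s_k ≥ (2/c)·√(Δ_k) and Δ_k − Δ_{k+1} ≥ (γ̂/2)·s_k². Then 2γ̂ < c²c̃₂², and Δ_{k+1} ≤ ρ·Δ_k for all k with ρ := 1 − 2γ̂/(c²c̃₂²) ∈ (0,1); consequently Δ_k ≤ ρ^k·Δ_0 for all k, i.e. {Δ_k} converges Q-linearly to 0. -/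
/-- abstract Q-linear convergence of the objective gap: if
`c̃₂ s_k ≥ (2/c)√Δ_k` (KL of exponent 1/2 plus residual bound) and
`Δ_k − Δ_{k+1} ≥ (γ̂/2)s_k²` (sufficient decrease) with `Δ_k > 0`, then
`2γ̂ < c²c̃₂²` and `Δ_{k+1} ≤ ρΔ_k` with `ρ = 1 − 2γ̂/(c²c̃₂²) ∈ (0,1)`; hence
`Δ_k ≤ ρ^k Δ 0`. -/
theorem stmt13 (Δ : ℕ → ℝ) (hΔ : ∀ k, 0 < Δ k)
    (s : ℕ → ℝ) (hs : ∀ k, 0 ≤ s k)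
    (c γhat c₂ : ℝ) (hc : 0 < c) (hγ : 0 < γhat) (hc₂ : 0 < c₂)
    (h1 : ∀ k, (2 / c) * Real.sqrt (Δ k) ≤ c₂ * s k)
    (h2 : ∀ k, (γhat / 2) * (s k) ^ 2 ≤ Δ k - Δ (k + 1)) :
    2 * γhat < c ^ 2 * c₂ ^ 2 ∧
    (0 < 1 - 2 * γhat / (c ^ 2 * c₂ ^ 2) ∧ 1 - 2 * γhat / (c ^ 2 * c₂ ^ 2) < 1) ∧
    (∀ k, Δ (k + 1) ≤ (1 - 2 * γhat / (c ^ 2 * c₂ ^ 2)) * Δ k) ∧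
    (∀ k, Δ k ≤ (1 - 2 * γhat / (c ^ 2 * c₂ ^ 2)) ^ k * Δ 0) := by
  have hA : 0 < c ^ 2 * c₂ ^ 2 := by positivity
  -- key contraction step
  have key : ∀ k, Δ (k + 1) ≤ (1 - 2 * γhat / (c ^ 2 * c₂ ^ 2)) * Δ k := by
    intro k
    have hsq : (2 / c) ^ 2 * Δ k ≤ c₂ ^ 2 * (s k) ^ 2 := by
      have h := h1 k
      have hL : 0 ≤ (2 / c) * Real.sqrt (Δ k) := by positivity
      have := mul_self_le_mul_self hL h
      have hδ : Real.sqrt (Δ k) * Real.sqrt (Δ k) = Δ k := Real.mul_self_sqrt (hΔ k).le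
      calc (2 / c) ^ 2 * Δ k
          = ((2 / c) * Real.sqrt (Δ k)) * ((2 / c) * Real.sqrt (Δ k)) := by
            linear_combination (-(2 / c) ^ 2) * hδ
        _ ≤ (c₂ * s k) * (c₂ * s k) := this
        _ = c₂ ^ 2 * (s k) ^ 2 := by ring
    have h4 : 4 * Δ k ≤ c ^ 2 * (c₂ ^ 2 * (s k) ^ 2) := by
      have hm := mul_le_mul_of_nonneg_left hsq (sq_nonneg c)
      have hc2 : c ^ 2 * ((2 / c) ^ 2 * Δ k) = 4 * Δ k := by
        field_simp
        ring
      linarith [hc2]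
    have hs2 : 4 * Δ k / (c ^ 2 * c₂ ^ 2) ≤ (s k) ^ 2 := by
      rw [div_le_iff₀ hA]
      have heq : (s k) ^ 2 * (c ^ 2 * c₂ ^ 2) = c ^ 2 * (c₂ ^ 2 * (s k) ^ 2) := by ring
      linarith
    have hdec : γhat / 2 * (4 * Δ k / (c ^ 2 * c₂ ^ 2)) ≤ Δ k - Δ (k + 1) := by
      have := h2 k
      nlinarith
    have : 2 * γhat * Δ k / (c ^ 2 * c₂ ^ 2) ≤ Δ k - Δ (k + 1) := by
      have heq : γhat / 2 * (4 * Δ k / (c ^ 2 * c₂ ^ 2)) = 2 * γhat * Δ k / (c ^ 2 * c₂ ^ 2) := by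
        ring
      linarith [heq]
    have hrw : (1 - 2 * γhat / (c ^ 2 * c₂ ^ 2)) * Δ k = Δ k - 2 * γhat * Δ k / (c ^ 2 * c₂ ^ 2) := by
      field_simp
    linarith [hrw]
  have hlt : 2 * γhat < c ^ 2 * c₂ ^ 2 := by
    have h0 := key 0
    have h1' := hΔ 1
    have h0' := hΔ 0
    have hρpos : 0 < 1 - 2 * γhat / (c ^ 2 * c₂ ^ 2) := by
      by_contra h
      push_neg at h
      nlinarith
    rw [sub_pos, div_lt_one hA] at hρpos
    exact hρpos
  have hρ : 0 < 1 - 2 * γhat / (c ^ 2 * c₂ ^ 2) := by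
    rw [sub_pos, div_lt_one hA]; exact hlt
  refine ⟨hlt, ⟨hρ, by nlinarith [div_pos (by linarith : (0:ℝ) < 2 * γhat) hA]⟩, key, ?_⟩
  intro k
  induction k with
  | zero => simp
  | succ n ih =>
    calc Δ (n + 1) ≤ (1 - 2 * γhat / (c ^ 2 * c₂ ^ 2)) * Δ n := key n
      _ ≤ (1 - 2 * γhat / (c ^ 2 * c₂ ^ 2)) * ((1 - 2 * γhat / (c ^ 2 * c₂ ^ 2)) ^ n * Δ 0) := by
          exact mul_le_mul_of_nonneg_left ih hρ.le
      _ = (1 - 2 * γhat / (c ^ 2 * c₂ ^ 2)) ^ (n + 1) * Δ 0 := by ring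
end

section
/- Let s≥1 and let {G_j}_{j∈ℕ} be a sequence of s×s real symmetric positive definite matrices converging (in any matrix norm) to a matrix G*, and let {r_j}_{j∈ℕ} ⊂ ℝ^s∖{0}. If there is a constant C>0 such that ‖G_j^{−1}r_j‖ ≤ C‖r_j‖ for all j, then liminf_{j→∞} ⟨r_j, G_j^{−1}r_j⟩ / ( ‖r_j‖·‖G_j^{−1}r_j‖ ) > 0, i.e. the angle between r_j and the direction d_j := −G_j^{−1}r_j stays bounded away from π/2. -/
open Matrix Finset MatrixOrder in
lemma key_ineq {n : ℕ} {A : Matrix (Fin n) (Fin n) ℝ} (hA : A.PosSemidef) (d : Fin n → ℝ) :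
    ∑ i, (A.mulVec d i) ^ 2 ≤ A.trace * ∑ i, A.mulVec d i * d i := by
  set S := CFC.sqrt A with hSdef
  have hSsym : Sᵀ = S := (CFC.sqrt_nonneg A).posSemidef.1
  have hSS : S * S = A := CFC.sqrt_mul_sqrt_self A hA.nonneg
  set e := S.mulVec d with he
  have hAd : A.mulVec d = S.mulVec e := by rw [he, Matrix.mulVec_mulVec, hSS]
  have htr : ∑ i, ∑ k, (S i k) ^ 2 = A.trace := by
    rw [← hSS, Matrix.trace]
    simp only [Matrix.diag, Matrix.mul_apply]
    congr 1; ext i; congr 1; ext k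
    have h : S i k = S k i := by rw [← Matrix.transpose_apply S k i, hSsym]
    rw [← h, sq]
  have hquad : ∑ k, e k ^ 2 = ∑ i, A.mulVec d i * d i := by
    have h1 : ∑ k, e k ^ 2 = e ⬝ᵥ S.mulVec d := by
      simp [dotProduct, he, sq]
    have h2 : e ⬝ᵥ S.mulVec d = (A.mulVec d) ⬝ᵥ d := by
      rw [dotProduct_mulVec, ← Matrix.mulVec_transpose, hSsym, ← hAd]
    rw [h1, h2]; rfl
  calc ∑ i, (A.mulVec d i) ^ 2 = ∑ i, (∑ k, S i k * e k) ^ 2 := by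
        rw [hAd]; rfl
    _ ≤ ∑ i, (∑ k, (S i k) ^ 2) * ∑ k, e k ^ 2 := by
        refine Finset.sum_le_sum fun i _ => ?_
        exact Finset.sum_mul_sq_le_sq_mul_sq _ _ _
    _ = (∑ i, ∑ k, (S i k) ^ 2) * ∑ k, e k ^ 2 := by rw [← Finset.sum_mul]
    _ = A.trace * ∑ i, A.mulVec d i * d i := by rw [htr, hquad]

/-- angle condition from the direction-residual bound: if the
symmetric positive definite matrices `G_j` converge (entrywise, equivalently in
any matrix norm) to `G*`, `r_j ≠ 0`, and the directions `d_j = G_j⁻¹ r_j`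
(given by `G_j d_j = r_j`) satisfy `‖d_j‖ ≤ C‖r_j‖`, then
`liminf_j ⟨r_j, d_j⟩/(‖r_j‖‖d_j‖) > 0`. -/
theorem stmt15 (s : ℕ) (hs : 0 < s) (C : ℝ) (hC : 0 < C)
    (G : ℕ → Matrix (Fin s) (Fin s) ℝ) (hGpd : ∀ j, (G j).PosDef)
    (Gstar : Matrix (Fin s) (Fin s) ℝ)
    (hGlim : ∀ a b, Filter.Tendsto (fun j => G j a b) Filter.atTop (nhds (Gstar a b)))
    (r d : ℕ → EuclideanSpace ℝ (Fin s)) (hr : ∀ j, r j ≠ 0)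
    (hd : ∀ j i, (G j).mulVec (d j) i = r j i)
    (hbound : ∀ j, ‖d j‖ ≤ C * ‖r j‖) :
    0 < Filter.liminf
      (fun j => (inner ℝ (r j) (d j) : ℝ) / (‖r j‖ * ‖d j‖)) Filter.atTop := by
  -- basic positivity facts
  have hdne : ∀ j, d j ≠ 0 := by
    intro j hdj
    apply hr j
    ext i
    rw [← hd j i, hdj]
    simp [Matrix.mulVec_zero]
  have hrpos : ∀ j, 0 < ‖r j‖ := fun j => norm_pos_iff.mpr (hr j)
  have hdpos : ∀ j, 0 < ‖d j‖ := fun j => norm_pos_iff.mpr (hdne j)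
  -- inner product formula
  have hinner : ∀ j, (inner ℝ (r j) (d j) : ℝ) = ∑ i, (G j).mulVec (d j) i * d j i := by
    intro j
    rw [PiLp.inner_apply]
    refine Finset.sum_congr rfl fun i _ => ?_
    rw [RCLike.inner_apply, starRingEnd_apply, star_trivial, hd j i, mul_comm]
  have hinnerpos : ∀ j, 0 < (inner ℝ (r j) (d j) : ℝ) := by
    intro j
    rw [hinner j]
    have := (hGpd j).dotProduct_mulVec_pos (x := WithLp.ofLp (d j)) (fun h => hdne j (by ext i; exact congrFun h i))
    simpa [dotProduct, star_trivial, mul_comm] using this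
  -- norm of r squared
  have hnormr : ∀ j, ‖r j‖ ^ 2 = ∑ i, ((G j).mulVec (d j) i) ^ 2 := by
    intro j
    rw [← real_inner_self_eq_norm_sq, PiLp.inner_apply]
    refine Finset.sum_congr rfl fun i _ => ?_
    rw [RCLike.inner_apply, starRingEnd_apply, star_trivial, hd j i, sq]
  -- key inequality per j
  have hkey : ∀ j, ‖r j‖ ^ 2 ≤ (G j).trace * (inner ℝ (r j) (d j) : ℝ) := by
    intro j
    rw [hnormr j, hinner j]
    exact key_ineq (hGpd j).posSemidef (d j)
  -- trace converges
  have htr : Filter.Tendsto (fun j => (G j).trace) Filter.atTop (nhds Gstar.trace) := by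
    unfold Matrix.trace
    exact tendsto_finset_sum _ fun i _ => hGlim i i
  set M : ℝ := max (Gstar.trace + 1) 1 with hM
  have hMpos : (0:ℝ) < M := lt_of_lt_of_le one_pos (le_max_right _ _)
  have hev : ∀ᶠ j in Filter.atTop, (G j).trace ≤ M := by
    filter_upwards [htr.eventually (eventually_le_nhds (by linarith : Gstar.trace < Gstar.trace + 1))] with j hj
    exact le_trans hj (le_max_left _ _)
  -- eventual lower bound on the ratio
  have hlow : ∀ᶠ j in Filter.atTop,
      1 / (M * C) ≤ (inner ℝ (r j) (d j) : ℝ) / (‖r j‖ * ‖d j‖) := by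
    filter_upwards [hev] with j hj
    have h1 : ‖r j‖ ^ 2 ≤ M * (inner ℝ (r j) (d j) : ℝ) :=
      le_trans (hkey j) (mul_le_mul_of_nonneg_right hj (le_of_lt (hinnerpos j)))
    have h2 : ‖r j‖ * ‖d j‖ ≤ C * ‖r j‖ * ‖r j‖ := by
      calc ‖r j‖ * ‖d j‖ ≤ ‖r j‖ * (C * ‖r j‖) :=
            mul_le_mul_of_nonneg_left (hbound j) (le_of_lt (hrpos j))
        _ = C * ‖r j‖ * ‖r j‖ := by ring
    rw [div_le_div_iff₀ (by positivity) (mul_pos (hrpos j) (hdpos j))]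
    calc 1 * (‖r j‖ * ‖d j‖) ≤ C * ‖r j‖ * ‖r j‖ := by linarith [h2]
      _ = C * ‖r j‖ ^ 2 := by ring
      _ ≤ C * (M * (inner ℝ (r j) (d j) : ℝ)) := by
          exact mul_le_mul_of_nonneg_left h1 (le_of_lt hC)
      _ = (inner ℝ (r j) (d j) : ℝ) * (M * C) := by ring
  -- conclude
  have hcb : Filter.IsCoboundedUnder (· ≥ ·)
      Filter.atTop (fun j => (inner ℝ (r j) (d j) : ℝ) / (‖r j‖ * ‖d j‖)) := by
    apply Filter.isCoboundedUnder_ge_of_le Filter.atTop (x := 1)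
    intro j
    rw [div_le_one (mul_pos (hrpos j) (hdpos j))]
    exact real_inner_le_norm (r j) (d j)
  have := Filter.le_liminf_of_le hcb hlow
  exact lt_of_lt_of_le (by positivity) this
end
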